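/- Let U ⊆ ℝⁿ be open and let A, B be smooth fields of symmetric n×n matrices on U such that the quadratic functions F_A(x,p) := pᵀ A(x) p and F_B(x,p) := pᵀ B(x) p Poisson-commute on U × ℝⁿ, i.e., Σ_i (∂F_A/∂p_i · ∂F_B/∂x^i − ∂F_A/∂x^i · ∂F_B/∂p_i) = 0 identically. Define the operators Â f := Σ_{i,j} ∂_i(A^{ij} ∂_j f) and B̂ f := Σ_{i,j} ∂_i(B^{ij} ∂_j f) on smooth functions f : U → ℝ. Then the commutator Â B̂ − B̂ Â is a differential operator of order at most 2 without zero-order term: there exist a smooth field Q of symmetric n×n matrices and a smooth vector field V on U such that Â(B̂ f) − B̂(Â f) = Σ_{i,j} ∂_i(Q^{ij} ∂_j f) + Σ_ℓ V^ℓ ∂_ℓ f for every smooth f. -/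

import Mathlib

open Matrix

noncomputable section

/-- Partial derivative in the `i`-th coordinate direction of a real-valued function on `ℝⁿ`. -/
def pd {n : ℕ} (i : Fin n) (f : (Fin n → ℝ) → ℝ) : (Fin n → ℝ) → ℝ :=
  fun x => fderiv ℝ f x (Pi.single i 1)

/-- Iterated partial derivatives along a list of coordinate directions. -/
def iterPD {n : ℕ} : List (Fin n) → ((Fin n → ℝ) → ℝ) → ((Fin n → ℝ) → ℝ)
  | [], f => f
  | i :: l, f => pd i (iterPD l f)

/-- `g` is a (pseudo-Riemannian) metric on `U`: a smooth field of invertible symmetric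
real `n×n` matrices. -/
structure IsMetricOn {n : ℕ} (U : Set (Fin n → ℝ))
    (g : (Fin n → ℝ) → Matrix (Fin n) (Fin n) ℝ) : Prop where
  smooth : ∀ i j : Fin n, ContDiffOn ℝ (⊤ : ℕ∞) (fun x => g x i j) U
  symm : ∀ x ∈ U, (g x).IsSymm
  nondeg : ∀ x ∈ U, IsUnit (g x).det

/-- The Christoffel symbols `Γ^k_{ij}` of the metric `g`. -/
def Gamma {n : ℕ} (g : (Fin n → ℝ) → Matrix (Fin n) (Fin n) ℝ)
    (k i j : Fin n) (x : Fin n → ℝ) : ℝ :=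
  (1/2) * ∑ ℓ, (g x)⁻¹ k ℓ *
    (pd i (fun y => g y ℓ j) x + pd j (fun y => g y ℓ i) x - pd ℓ (fun y => g y i j) x)

/-- An open interval of `ℝ` (possibly empty or unbounded): an open order-connected set. -/
def IsOpenInterval (I : Set ℝ) : Prop := IsOpen I ∧ I.OrdConnected

/-- `γ` is a `g`-geodesic defined on the open interval `I`, with values in `U`. -/
structure IsGeodesicOn {n : ℕ} (U : Set (Fin n → ℝ))
    (g : (Fin n → ℝ) → Matrix (Fin n) (Fin n) ℝ)
    (γ : ℝ → (Fin n → ℝ)) (I : Set ℝ) : Prop where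
  interval : IsOpenInterval I
  smooth : ∀ k : Fin n, ContDiffOn ℝ (⊤ : ℕ∞) (fun s => γ s k) I
  mem : ∀ t ∈ I, γ t ∈ U
  eqn : ∀ t ∈ I, ∀ k : Fin n,
    deriv (deriv fun s => γ s k) t
      + ∑ i, ∑ j, Gamma g k i j (γ t) * deriv (fun s => γ s i) t * deriv (fun s => γ s j) t = 0

/-- `g` and `gbar` are projectively equivalent on `U`: every `g`-geodesic with nowhere
vanishing velocity becomes, after a smooth reparameterization (a diffeomorphism of open
intervals), a `gbar`-geodesic. -/
def ProjEquiv {n : ℕ} (U : Set (Fin n → ℝ))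
    (g gbar : (Fin n → ℝ) → Matrix (Fin n) (Fin n) ℝ) : Prop :=
  ∀ (γ : ℝ → (Fin n → ℝ)) (I : Set ℝ), IsGeodesicOn U g γ I →
    (∀ t ∈ I, ∃ k, deriv (fun s => γ s k) t ≠ 0) →
    ∃ (φ : ℝ → ℝ) (J : Set ℝ), IsOpenInterval J ∧ ContDiffOn ℝ (⊤ : ℕ∞) φ J ∧
      Set.InjOn φ J ∧ φ '' J = I ∧ (∀ t ∈ J, deriv φ t ≠ 0) ∧
      IsGeodesicOn U gbar (γ ∘ φ) J

/-- The (1,1)-tensor `L = |det gbar / det g|^{1/(n+1)} gbar⁻¹ g` built from `g` and `gbar`. -/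
def Lfield {n : ℕ} (g gbar : (Fin n → ℝ) → Matrix (Fin n) (Fin n) ℝ)
    (x : Fin n → ℝ) : Matrix (Fin n) (Fin n) ℝ :=
  |(gbar x).det / (g x).det| ^ ((1 : ℝ)/((n : ℝ)+1)) • ((gbar x)⁻¹ * g x)

/-- The family `S(t) = adjugate (t·Id − L)`. -/
def Sfield {n : ℕ} (g gbar : (Fin n → ℝ) → Matrix (Fin n) (Fin n) ℝ) (t : ℝ)
    (x : Fin n → ℝ) : Matrix (Fin n) (Fin n) ℝ :=
  (t • (1 : Matrix (Fin n) (Fin n) ℝ) - Lfield g gbar x).adjugate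

/-- The second order operator associated (via Carter's quantization) to a field `A` of
symmetric matrices: `Â f = |det g|^{-1/2} ∑ᵢⱼ ∂ᵢ(|det g|^{1/2} Aⁱʲ ∂ⱼ f)`. -/
def assocOp {n : ℕ} (g A : (Fin n → ℝ) → Matrix (Fin n) (Fin n) ℝ)
    (f : (Fin n → ℝ) → ℝ) (x : Fin n → ℝ) : ℝ :=
  |(g x).det| ^ (-(1 : ℝ)/2) * ∑ i, ∑ j,
    pd i (fun y => |(g y).det| ^ ((1 : ℝ)/2) * A y i j * pd j f y) x

/-- The operator `K̂^{(t)}`, associated to `A = S(t)·g⁻¹`. -/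
def Khat {n : ℕ} (g gbar : (Fin n → ℝ) → Matrix (Fin n) (Fin n) ℝ) (t : ℝ)
    (f : (Fin n → ℝ) → ℝ) (x : Fin n → ℝ) : ℝ :=
  assocOp g (fun y => Sfield g gbar t y * (g y)⁻¹) f x

/-- The Beltrami-Laplace operator of `g`, associated to `A = g⁻¹`. -/
def LaplaceOp {n : ℕ} (g : (Fin n → ℝ) → Matrix (Fin n) (Fin n) ℝ)
    (f : (Fin n → ℝ) → ℝ) (x : Fin n → ℝ) : ℝ :=
  assocOp g (fun y => (g y)⁻¹) f x

/-- `K` is a Killing tensor for `g` on `U`: the associated quadratic function is constant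
along every `g`-geodesic. -/
def IsKillingTensorOn {n : ℕ} (U : Set (Fin n → ℝ))
    (g K : (Fin n → ℝ) → Matrix (Fin n) (Fin n) ℝ) : Prop :=
  ∀ (γ : ℝ → (Fin n → ℝ)) (I : Set ℝ), IsGeodesicOn U g γ I →
    ∀ τ₁ ∈ I, ∀ τ₂ ∈ I,
      (∑ i, ∑ j, deriv (fun s => γ s i) τ₁ * K (γ τ₁) i j * deriv (fun s => γ s j) τ₁) =
      (∑ i, ∑ j, deriv (fun s => γ s i) τ₂ * K (γ τ₂) i j * deriv (fun s => γ s j) τ₂)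

/-- The covariant derivative `∇_k T_{ij}` of a (0,2)-tensor field `T`. -/
def covDeriv2 {n : ℕ} (g T : (Fin n → ℝ) → Matrix (Fin n) (Fin n) ℝ)
    (k i j : Fin n) (x : Fin n → ℝ) : ℝ :=
  pd k (fun y => T y i j) x - (∑ s, Gamma g s k i x * T x s j)
    - ∑ s, Gamma g s k j x * T x i s

/-- The Ricci curvature tensor `R_{ij}` of `g`. -/
def Ricci {n : ℕ} (g : (Fin n → ℝ) → Matrix (Fin n) (Fin n) ℝ)
    (i j : Fin n) (x : Fin n → ℝ) : ℝ :=
  (∑ ℓ, pd ℓ (fun y => Gamma g ℓ i j y) x) - (∑ ℓ, pd i (fun y => Gamma g ℓ ℓ j y) x)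
    + ∑ ℓ, ∑ s, (Gamma g ℓ ℓ s x * Gamma g s i j x - Gamma g ℓ i s x * Gamma g s ℓ j x)

/-- A function vanishes up to order `k` at `p`: it and all its partial derivatives of
order `≤ k` vanish at `p`. -/
def VanishUpTo {n : ℕ} (k : ℕ) (f : (Fin n → ℝ) → ℝ) (p : Fin n → ℝ) : Prop :=
  ∀ l : List (Fin n), l.length ≤ k → iterPD l f p = 0


/-- The plain (flat) second order operator `Â f = ∑ᵢⱼ ∂ᵢ(Aⁱʲ ∂ⱼ f)` associated to a
matrix field `A`. -/
def opPlain {n : ℕ} (A : (Fin n → ℝ) → Matrix (Fin n) (Fin n) ℝ)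
    (f : (Fin n → ℝ) → ℝ) (x : Fin n → ℝ) : ℝ :=
  ∑ i, ∑ j, pd i (fun y => A y i j * pd j f y) x

end

noncomputable section
namespace PdAux

variable {n : ℕ} {U : Set (Fin n → ℝ)} {x : Fin n → ℝ} {i j : Fin n}
variable {f g : (Fin n → ℝ) → ℝ}

theorem pd_congr (h : f =ᶠ[nhds x] g) : pd i f x = pd i g x := by
  unfold pd; rw [h.fderiv_eq]

theorem pd_congrOn (hU : IsOpen U) (h : ∀ y ∈ U, f y = g y) (hx : x ∈ U) :
    pd i f x = pd i g x := by
  apply pd_congr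
  filter_upwards [hU.mem_nhds hx] with y hy using h y hy

theorem pd_add (hf : DifferentiableAt ℝ f x) (hg : DifferentiableAt ℝ g x) :
    pd i (fun y => f y + g y) x = pd i f x + pd i g x := by
  unfold pd; rw [fderiv_fun_add hf hg]; rfl

theorem pd_mul (hf : DifferentiableAt ℝ f x) (hg : DifferentiableAt ℝ g x) :
    pd i (fun y => f y * g y) x = pd i f x * g x + f x * pd i g x := by
  unfold pd; rw [fderiv_fun_mul hf hg]; simp; ring

theorem pd_sum {ι : Type*} (s : Finset ι) (F : ι → (Fin n → ℝ) → ℝ)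
    (hF : ∀ k ∈ s, DifferentiableAt ℝ (F k) x) :
    pd i (fun y => ∑ k ∈ s, F k y) x = ∑ k ∈ s, pd i (F k) x := by
  unfold pd; rw [fderiv_fun_sum hF]; simp

theorem pd_const (c : ℝ) : pd i (fun _ => c) x = 0 := by
  unfold pd; simp

theorem pd_coord (a : Fin n) :
    pd i (fun p : Fin n → ℝ => p a) x = if a = i then 1 else 0 := by
  have : (fun p : Fin n → ℝ => p a) = (ContinuousLinearMap.proj (R := ℝ)
      (φ := fun _ : Fin n => ℝ) a) := rfl
  unfold pd
  rw [this, ContinuousLinearMap.fderiv]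
  simp [Pi.single_apply]

theorem pd_contDiffOn (hU : IsOpen U) (hf : ContDiffOn ℝ (⊤ : ℕ∞) f U) :
    ContDiffOn ℝ (⊤ : ℕ∞) (pd i f) U := by
  have h1 : ContDiffOn ℝ (⊤ : ℕ∞) (fun y => fderiv ℝ f y) U := by
    exact hf.fderiv_of_isOpen hU le_rfl
  exact ContDiffOn.clm_apply h1 contDiffOn_const

theorem diffAt {F : Type*} [NormedAddCommGroup F] [NormedSpace ℝ F]
    {f : (Fin n → ℝ) → F} (hU : IsOpen U) (hf : ContDiffOn ℝ (⊤ : ℕ∞) f U) (hx : x ∈ U) :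
    DifferentiableAt ℝ f x := by
  have h1 : ((1:ℕ∞) : WithTop ℕ∞) ≤ ((⊤:ℕ∞) : WithTop ℕ∞) := by exact_mod_cast le_top
  exact ((hf x hx).contDiffAt (hU.mem_nhds hx)).differentiableAt (by simpa using h1)

theorem pd_comm (hU : IsOpen U) (hf : ContDiffOn ℝ (⊤ : ℕ∞) f U) (hx : x ∈ U) :
    pd i (pd j f) x = pd j (pd i f) x := by
  have hsymm : IsSymmSndFDerivAt ℝ f x := by
    have : ContDiffAt ℝ (⊤ : ℕ∞) f x := (hf x hx).contDiffAt (hU.mem_nhds hx)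
    have h2 : ((2:ℕ∞) : WithTop ℕ∞) ≤ ((⊤:ℕ∞) : WithTop ℕ∞) := by exact_mod_cast le_top
    exact this.isSymmSndFDerivAt (by simpa using h2)
  have hder : ∀ (k : Fin n), pd k f = fun y => (fderiv ℝ f y) (Pi.single k 1) := fun _ => rfl
  have hdiff : DifferentiableAt ℝ (fun y => fderiv ℝ f y) x := by
    have := (pd_contDiffOn (i := i) hU hf)
    have h2 : ContDiffOn ℝ ((⊤:ℕ∞) : WithTop ℕ∞) (fun y => fderiv ℝ f y) U := hf.fderiv_of_isOpen hU le_rfl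
    exact diffAt hU h2 hx
  have key : ∀ (a b : Fin n), pd a (pd b f) x =
      fderiv ℝ (fderiv ℝ f) x (Pi.single a 1) (Pi.single b 1) := by
    intro a b
    show fderiv ℝ (fun y => (fderiv ℝ f y) (Pi.single b 1)) x (Pi.single a 1) = _
    rw [fderiv_clm_apply hdiff (differentiableAt_const _)]
    simp
  rw [key, key, hsymm (Pi.single i 1) (Pi.single j 1)]


theorem coord_diff {n : ℕ} {x : Fin n → ℝ} (a : Fin n) :
    DifferentiableAt ℝ (fun p : Fin n → ℝ => p a) x :=
  (ContinuousLinearMap.proj (R := ℝ) (φ := fun _ : Fin n => ℝ) a).differentiableAt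

theorem pd_const_mul {n : ℕ} {x : Fin n → ℝ} {i : Fin n} {g : (Fin n → ℝ) → ℝ} (c : ℝ)
    (hg : DifferentiableAt ℝ g x) :
    pd i (fun y => c * g y) x = c * pd i g x := by
  rw [pd_mul (differentiableAt_const c) hg, pd_const]
  ring

theorem pd_mul_const {n : ℕ} {x : Fin n → ℝ} {i : Fin n} {g : (Fin n → ℝ) → ℝ} (c : ℝ)
    (hg : DifferentiableAt ℝ g x) :
    pd i (fun y => g y * c) x = pd i g x * c := by
  rw [pd_mul hg (differentiableAt_const c), pd_const]
  ring

theorem nest4 {n : ℕ} (G : Fin n → Fin n → Fin n → Fin n → ℝ) :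
    (∑ i, ∑ j, ∑ k, ∑ l, G i j k l)
      = ∑ p : Fin n × Fin n × Fin n × Fin n, G p.1 p.2.1 p.2.2.1 p.2.2.2 := by
  rw [Fintype.sum_prod_type]
  refine Finset.sum_congr rfl fun i _ => ?_
  rw [Fintype.sum_prod_type]
  refine Finset.sum_congr rfl fun j _ => ?_
  rw [Fintype.sum_prod_type]

end PdAux


end
noncomputable section
namespace PdAux

variable {n : ℕ}

/-- second-order coefficient of the commutator -/
def cc (A B : (Fin n → ℝ) → Matrix (Fin n) (Fin n) ℝ) (x : Fin n → ℝ) (k l : Fin n) : ℝ :=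
  ∑ i, ∑ j,
    (A x i j * pd i (pd j (fun y => B y k l)) x - B x i j * pd i (pd j (fun y => A y k l)) x
     + (pd i (fun y => A y i j) x * pd j (fun y => B y k l) x
        - pd i (fun y => B y i j) x * pd j (fun y => A y k l) x)
     + (pd i (fun y => A y i k) x * pd j (fun y => B y j l) x
        - pd i (fun y => B y i k) x * pd j (fun y => A y j l) x)
     + (A x k j * pd j (pd i (fun y => B y i l)) x - B x k j * pd j (pd i (fun y => A y i l)) x)
     + (A x i k * pd i (pd j (fun y => B y j l)) x - B x i k * pd i (pd j (fun y => A y j l)) x))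

/-- first-order coefficient of the commutator -/
def ww (A B : (Fin n → ℝ) → Matrix (Fin n) (Fin n) ℝ) (x : Fin n → ℝ) (l : Fin n) : ℝ :=
  ∑ i, ∑ j, ∑ k,
    (pd i (fun y => A y i j) x * pd j (pd k (fun y => B y k l)) x
     + A x i j * pd i (pd j (pd k (fun y => B y k l))) x
     - pd i (fun y => B y i j) x * pd j (pd k (fun y => A y k l)) x
     - B x i j * pd i (pd j (pd k (fun y => A y k l))) x)

variable {U : Set (Fin n → ℝ)}

theorem cc_smooth (hU : IsOpen U) (A B : (Fin n → ℝ) → Matrix (Fin n) (Fin n) ℝ)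
    (hA : ∀ i j, ContDiffOn ℝ (⊤ : ℕ∞) (fun y => A y i j) U)
    (hB : ∀ i j, ContDiffOn ℝ (⊤ : ℕ∞) (fun y => B y i j) U)
    (k l : Fin n) : ContDiffOn ℝ (⊤ : ℕ∞) (fun x => cc A B x k l) U := by
  unfold cc
  apply ContDiffOn.sum; intro i _
  apply ContDiffOn.sum; intro j _
  refine (((((((hA i j).mul (pd_contDiffOn hU (pd_contDiffOn hU (hB k l)))).sub
    ((hB i j).mul (pd_contDiffOn hU (pd_contDiffOn hU (hA k l))))).add
    (((pd_contDiffOn hU (hA i j)).mul (pd_contDiffOn hU (hB k l))).sub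
     ((pd_contDiffOn hU (hB i j)).mul (pd_contDiffOn hU (hA k l))))).add
    (((pd_contDiffOn hU (hA i k)).mul (pd_contDiffOn hU (hB j l))).sub
     ((pd_contDiffOn hU (hB i k)).mul (pd_contDiffOn hU (hA j l))))).add
    (((hA k j).mul (pd_contDiffOn hU (pd_contDiffOn hU (hB i l)))).sub
     ((hB k j).mul (pd_contDiffOn hU (pd_contDiffOn hU (hA i l)))))).add
    (((hA i k).mul (pd_contDiffOn hU (pd_contDiffOn hU (hB j l)))).sub
     ((hB i k).mul (pd_contDiffOn hU (pd_contDiffOn hU (hA j l))))))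

theorem ww_smooth (hU : IsOpen U) (A B : (Fin n → ℝ) → Matrix (Fin n) (Fin n) ℝ)
    (hA : ∀ i j, ContDiffOn ℝ (⊤ : ℕ∞) (fun y => A y i j) U)
    (hB : ∀ i j, ContDiffOn ℝ (⊤ : ℕ∞) (fun y => B y i j) U)
    (l : Fin n) : ContDiffOn ℝ (⊤ : ℕ∞) (fun x => ww A B x l) U := by
  unfold ww
  apply ContDiffOn.sum; intro i _
  apply ContDiffOn.sum; intro j _
  apply ContDiffOn.sum; intro k _
  refine ((((pd_contDiffOn hU (hA i j)).mul
      (pd_contDiffOn hU (pd_contDiffOn hU (hB k l)))).add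
    ((hA i j).mul (pd_contDiffOn hU (pd_contDiffOn hU (pd_contDiffOn hU (hB k l)))))).sub
    ((pd_contDiffOn hU (hB i j)).mul (pd_contDiffOn hU (pd_contDiffOn hU (hA k l))))).sub
    ((hB i j).mul (pd_contDiffOn hU (pd_contDiffOn hU (pd_contDiffOn hU (hA k l)))))

end PdAux
end
noncomputable section
namespace PdAux

variable {n : ℕ}

theorem delta_sum (S : Fin n → Fin n → Fin n → ℝ) (s k l : Fin n) :
    ∑ a, ∑ b, ∑ c, S a b c * (if a = s then (1:ℝ) else 0) * (if b = k then (1:ℝ) else 0)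
      * (if c = l then (1:ℝ) else 0) = S s k l := by
  simp [ite_mul, mul_ite, mul_zero, zero_mul, mul_one, Finset.sum_ite_eq', Finset.mem_univ]

theorem polarize (S : Fin n → Fin n → Fin n → ℝ)
    (h : ∀ p : Fin n → ℝ, ∑ a, ∑ b, ∑ c, S a b c * p a * p b * p c = 0) (s k l : Fin n) :
    S s k l + S s l k + S k s l + S k l s + S l s k + S l k s = 0 := by
  classical
  set ds : Fin n → ℝ := fun a => if a = s then 1 else 0 with hds
  set dk : Fin n → ℝ := fun a => if a = k then 1 else 0 with hdk
  set dl : Fin n → ℝ := fun a => if a = l then 1 else 0 with hdl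
  have h111 : ∑ a, ∑ b, ∑ c, S a b c * (ds a + dk a + dl a) * (ds b + dk b + dl b)
      * (ds c + dk c + dl c) = 0 := by simpa using h (fun a => ds a + dk a + dl a)
  have h110 : ∑ a, ∑ b, ∑ c, S a b c * (ds a + dk a) * (ds b + dk b) * (ds c + dk c) = 0 := by
    simpa using h (fun a => ds a + dk a)
  have h101 : ∑ a, ∑ b, ∑ c, S a b c * (ds a + dl a) * (ds b + dl b) * (ds c + dl c) = 0 := by
    simpa using h (fun a => ds a + dl a)
  have h011 : ∑ a, ∑ b, ∑ c, S a b c * (dk a + dl a) * (dk b + dl b) * (dk c + dl c) = 0 := by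
    simpa using h (fun a => dk a + dl a)
  have h100 : ∑ a, ∑ b, ∑ c, S a b c * ds a * ds b * ds c = 0 := by simpa using h ds
  have h010 : ∑ a, ∑ b, ∑ c, S a b c * dk a * dk b * dk c = 0 := by simpa using h dk
  have h001 : ∑ a, ∑ b, ∑ c, S a b c * dl a * dl b * dl c = 0 := by simpa using h dl
  have comb : ((∑ a, ∑ b, ∑ c, S a b c * (ds a + dk a + dl a) * (ds b + dk b + dl b)
        * (ds c + dk c + dl c))
      - (∑ a, ∑ b, ∑ c, S a b c * (ds a + dk a) * (ds b + dk b) * (ds c + dk c))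
      - (∑ a, ∑ b, ∑ c, S a b c * (ds a + dl a) * (ds b + dl b) * (ds c + dl c))
      - (∑ a, ∑ b, ∑ c, S a b c * (dk a + dl a) * (dk b + dl b) * (dk c + dl c))
      + (∑ a, ∑ b, ∑ c, S a b c * ds a * ds b * ds c)
      + (∑ a, ∑ b, ∑ c, S a b c * dk a * dk b * dk c)
      + (∑ a, ∑ b, ∑ c, S a b c * dl a * dl b * dl c))
      = (∑ a, ∑ b, ∑ c, S a b c * ds a * dk b * dl c)
      + (∑ a, ∑ b, ∑ c, S a b c * ds a * dl b * dk c)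
      + (∑ a, ∑ b, ∑ c, S a b c * dk a * ds b * dl c)
      + (∑ a, ∑ b, ∑ c, S a b c * dk a * dl b * ds c)
      + (∑ a, ∑ b, ∑ c, S a b c * dl a * ds b * dk c)
      + (∑ a, ∑ b, ∑ c, S a b c * dl a * dk b * ds c) := by
    simp only [← Finset.sum_sub_distrib, ← Finset.sum_add_distrib]
    refine Finset.sum_congr rfl fun a _ => ?_
    refine Finset.sum_congr rfl fun b _ => ?_
    refine Finset.sum_congr rfl fun c _ => ?_
    ring
  rw [h111, h110, h101, h011, h100, h010, h001] at comb
  have comb2 := comb.symm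
  rw [hds, hdk, hdl] at comb2
  rw [delta_sum S s k l] at comb2
  rw [delta_sum S s l k, delta_sum S k s l, delta_sum S k l s, delta_sum S l s k,
      delta_sum S l k s] at comb2
  linarith [comb2]


theorem contract_zero (T D : Fin n → Fin n → Fin n → ℝ)
    (hT : ∀ s k l, T s k l + T s l k + T k s l + T k l s + T l s k + T l k s = 0)
    (hD1 : ∀ s k l, D s k l = D s l k)
    (hD2 : ∀ s k l, D s k l = D k s l) :
    ∑ s, ∑ k, ∑ l, T s k l * D s k l = 0 := by
  have hD3 : ∀ s k l, D s k l = D k l s := fun s k l => by rw [hD2, hD1]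
  have hprod : ∀ (G : Fin n → Fin n → Fin n → ℝ),
      (∑ p : Fin n × Fin n × Fin n, G p.1 p.2.1 p.2.2) = ∑ s, ∑ k, ∑ l, G s k l := by
    intro G; rw [Fintype.sum_prod_type]
    exact Finset.sum_congr rfl fun s _ => by rw [Fintype.sum_prod_type]
  have key : ∑ p : Fin n × Fin n × Fin n,
      (T p.1 p.2.1 p.2.2 + T p.1 p.2.2 p.2.1 + T p.2.1 p.1 p.2.2 + T p.2.1 p.2.2 p.1
        + T p.2.2 p.1 p.2.1 + T p.2.2 p.2.1 p.1) * D p.1 p.2.1 p.2.2 = 0 := by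
    apply Finset.sum_eq_zero
    intro p _
    have h := hT p.1 p.2.1 p.2.2
    rw [show T p.1 p.2.1 p.2.2 + T p.1 p.2.2 p.2.1 + T p.2.1 p.1 p.2.2 + T p.2.1 p.2.2 p.1
        + T p.2.2 p.1 p.2.1 + T p.2.2 p.2.1 p.1 = 0 by linarith, zero_mul]
  have e2 : (∑ p : Fin n × Fin n × Fin n, T p.1 p.2.2 p.2.1 * D p.1 p.2.1 p.2.2)
      = ∑ p : Fin n × Fin n × Fin n, T p.1 p.2.1 p.2.2 * D p.1 p.2.1 p.2.2 := by
    refine Fintype.sum_bijective (fun p : Fin n × Fin n × Fin n => (p.1, p.2.2, p.2.1))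
      (Function.Involutive.bijective fun p => rfl) _ _ fun p => ?_
    show T p.1 p.2.2 p.2.1 * D p.1 p.2.1 p.2.2 = T p.1 p.2.2 p.2.1 * D p.1 p.2.2 p.2.1
    rw [← hD1]
  have e3 : (∑ p : Fin n × Fin n × Fin n, T p.2.1 p.1 p.2.2 * D p.1 p.2.1 p.2.2)
      = ∑ p : Fin n × Fin n × Fin n, T p.1 p.2.1 p.2.2 * D p.1 p.2.1 p.2.2 := by
    refine Fintype.sum_bijective (fun p : Fin n × Fin n × Fin n => (p.2.1, p.1, p.2.2))
      (Function.Involutive.bijective fun p => rfl) _ _ fun p => ?_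
    show T p.2.1 p.1 p.2.2 * D p.1 p.2.1 p.2.2 = T p.2.1 p.1 p.2.2 * D p.2.1 p.1 p.2.2
    rw [← hD2]
  have e4 : (∑ p : Fin n × Fin n × Fin n, T p.2.1 p.2.2 p.1 * D p.1 p.2.1 p.2.2)
      = ∑ p : Fin n × Fin n × Fin n, T p.1 p.2.1 p.2.2 * D p.1 p.2.1 p.2.2 := by
    refine Fintype.sum_bijective (fun p : Fin n × Fin n × Fin n => (p.2.1, p.2.2, p.1))
      (Equiv.mk (fun p : Fin n × Fin n × Fin n => (p.2.1, p.2.2, p.1))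
        (fun p => (p.2.2, p.1, p.2.1)) (fun p => rfl) (fun p => rfl)).bijective _ _ fun p => ?_
    show T p.2.1 p.2.2 p.1 * D p.1 p.2.1 p.2.2 = T p.2.1 p.2.2 p.1 * D p.2.1 p.2.2 p.1
    rw [hD3 p.1 p.2.1 p.2.2]
  have e5 : (∑ p : Fin n × Fin n × Fin n, T p.2.2 p.1 p.2.1 * D p.1 p.2.1 p.2.2)
      = ∑ p : Fin n × Fin n × Fin n, T p.1 p.2.1 p.2.2 * D p.1 p.2.1 p.2.2 := by
    refine Fintype.sum_bijective (fun p : Fin n × Fin n × Fin n => (p.2.2, p.1, p.2.1))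
      (Equiv.mk (fun p : Fin n × Fin n × Fin n => (p.2.2, p.1, p.2.1))
        (fun p => (p.2.1, p.2.2, p.1)) (fun p => rfl) (fun p => rfl)).bijective _ _ fun p => ?_
    show T p.2.2 p.1 p.2.1 * D p.1 p.2.1 p.2.2 = T p.2.2 p.1 p.2.1 * D p.2.2 p.1 p.2.1
    rw [show D p.1 p.2.1 p.2.2 = D p.2.2 p.1 p.2.1 by rw [hD3, hD3]]
  have e6 : (∑ p : Fin n × Fin n × Fin n, T p.2.2 p.2.1 p.1 * D p.1 p.2.1 p.2.2)
      = ∑ p : Fin n × Fin n × Fin n, T p.1 p.2.1 p.2.2 * D p.1 p.2.1 p.2.2 := by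
    refine Fintype.sum_bijective (fun p : Fin n × Fin n × Fin n => (p.2.2, p.2.1, p.1))
      (Function.Involutive.bijective fun p => rfl) _ _ fun p => ?_
    show T p.2.2 p.2.1 p.1 * D p.1 p.2.1 p.2.2 = T p.2.2 p.2.1 p.1 * D p.2.2 p.2.1 p.1
    rw [show D p.1 p.2.1 p.2.2 = D p.2.2 p.2.1 p.1 by rw [hD2, hD1, hD2]]
  have split : ∑ p : Fin n × Fin n × Fin n,
      (T p.1 p.2.1 p.2.2 + T p.1 p.2.2 p.2.1 + T p.2.1 p.1 p.2.2 + T p.2.1 p.2.2 p.1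
        + T p.2.2 p.1 p.2.1 + T p.2.2 p.2.1 p.1) * D p.1 p.2.1 p.2.2
      = 6 * ∑ p : Fin n × Fin n × Fin n, T p.1 p.2.1 p.2.2 * D p.1 p.2.1 p.2.2 := by
    simp only [add_mul, Finset.sum_add_distrib, e2, e3, e4, e5, e6]
    ring
  rw [split] at key
  rw [← hprod (fun s k l => T s k l * D s k l)]
  linarith

end PdAux
end
noncomputable section
namespace PdAux

variable {n : ℕ} {U : Set (Fin n → ℝ)}

/-- derivative in `p` of the quadratic form of a constant matrix -/
theorem pd_quad (C : Matrix (Fin n) (Fin n) ℝ) (i : Fin n) (p : Fin n → ℝ) :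
    pd i (fun p' => ∑ a, ∑ b, p' a * C a b * p' b) p
      = ∑ a, (C i a + C a i) * p a := by
  have hterm : ∀ (a b : Fin n), DifferentiableAt ℝ (fun p' : Fin n → ℝ => p' a * C a b * p' b) p :=
    fun a b => ((coord_diff a).mul_const (C a b)).mul (coord_diff b)
  rw [pd_sum Finset.univ _ (fun a _ => DifferentiableAt.fun_sum (fun b _ => hterm a b))]
  have hin : ∀ a : Fin n, pd i (fun p' => ∑ b, p' a * C a b * p' b) p
      = ∑ b, ((if a = i then (1:ℝ) else 0) * C a b * p b + p a * C a b * (if b = i then (1:ℝ) else 0)) := by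
    intro a
    rw [pd_sum Finset.univ _ (fun b _ => hterm a b)]
    refine Finset.sum_congr rfl fun b _ => ?_
    rw [pd_mul ((coord_diff a).mul_const (C a b)) (coord_diff b),
        pd_mul_const (C a b) (coord_diff a), pd_coord, pd_coord]
  rw [Finset.sum_congr rfl fun a _ => hin a]
  simp only [Finset.sum_add_distrib]
  have hfirst : (∑ a, ∑ b, (if a = i then (1:ℝ) else 0) * C a b * p b) = ∑ b, C i b * p b := by
    rw [Finset.sum_eq_single i (fun a _ ha => by simp [ha]) (by simp)]
    simp
  have hsecond : (∑ a, ∑ b, p a * C a b * (if b = i then (1:ℝ) else 0)) = ∑ a, p a * C a i := by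
    refine Finset.sum_congr rfl fun a _ => ?_
    rw [Finset.sum_eq_single i (fun b _ hb => by simp [hb]) (by simp)]
    simp
  rw [hfirst, hsecond, ← Finset.sum_add_distrib]
  refine Finset.sum_congr rfl fun a _ => ?_
  ring

/-- derivative in `x` of the quadratic form with constant vector -/
theorem pd_quadx (hU : IsOpen U) (B : (Fin n → ℝ) → Matrix (Fin n) (Fin n) ℝ)
    (hB : ∀ i j, ContDiffOn ℝ (⊤ : ℕ∞) (fun y => B y i j) U)
    (i : Fin n) (p : Fin n → ℝ) {x : Fin n → ℝ} (hx : x ∈ U) :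
    pd i (fun x' => ∑ a, ∑ b, p a * B x' a b * p b) x
      = ∑ a, ∑ b, p a * pd i (fun y => B y a b) x * p b := by
  have hterm : ∀ (a b : Fin n), DifferentiableAt ℝ (fun x' => p a * B x' a b * p b) x :=
    fun a b => ((diffAt hU (hB a b) hx).const_mul (p a)).mul_const (p b)
  rw [pd_sum Finset.univ _ (fun a _ => DifferentiableAt.fun_sum (fun b _ => hterm a b))]
  refine Finset.sum_congr rfl fun a _ => ?_
  rw [pd_sum Finset.univ _ (fun b _ => hterm a b)]
  refine Finset.sum_congr rfl fun b _ => ?_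
  rw [pd_mul_const (p b) ((diffAt hU (hB a b) hx).const_mul (p a)),
      pd_const_mul (p a) (diffAt hU (hB a b) hx)]

theorem tri_mul (g : Fin n → ℝ) (h : Fin n → Fin n → ℝ) (p : Fin n → ℝ) :
    (∑ s, (g s * p s)) * (∑ k, ∑ l, p k * h k l * p l)
      = ∑ s, ∑ k, ∑ l, g s * h k l * p s * p k * p l := by
  rw [Finset.sum_mul]
  refine Finset.sum_congr rfl fun s _ => ?_
  rw [Finset.mul_sum]
  refine Finset.sum_congr rfl fun k _ => ?_
  rw [Finset.mul_sum]
  refine Finset.sum_congr rfl fun l _ => ?_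
  ring

theorem sum_swap_out (F : Fin n → Fin n → Fin n → Fin n → ℝ) :
    (∑ s, ∑ k, ∑ l, ∑ i, F s k l i) = ∑ i, ∑ s, ∑ k, ∑ l, F s k l i := by
  have h1 : (∑ s, ∑ k, ∑ l, ∑ i, F s k l i) = ∑ s, ∑ k, ∑ i, ∑ l, F s k l i :=
    Finset.sum_congr rfl fun s _ => Finset.sum_congr rfl fun k _ => Finset.sum_comm
  have h2 : (∑ s, ∑ k, ∑ i, ∑ l, F s k l i) = ∑ s, ∑ i, ∑ k, ∑ l, F s k l i :=
    Finset.sum_congr rfl fun s _ => Finset.sum_comm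
  have h3 : (∑ s, ∑ i, ∑ k, ∑ l, F s k l i) = ∑ i, ∑ s, ∑ k, ∑ l, F s k l i :=
    Finset.sum_comm
  rw [h1, h2, h3]

theorem poisson_cubic (hU : IsOpen U) (A B : (Fin n → ℝ) → Matrix (Fin n) (Fin n) ℝ)
    (hA : ∀ i j, ContDiffOn ℝ (⊤ : ℕ∞) (fun y => A y i j) U)
    (hB : ∀ i j, ContDiffOn ℝ (⊤ : ℕ∞) (fun y => B y i j) U)
    (hP : ∀ x ∈ U, ∀ p : Fin n → ℝ,
      ∑ i, (pd i (fun p' => ∑ a, ∑ b, p' a * A x a b * p' b) p *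
              pd i (fun x' => ∑ a, ∑ b, p a * B x' a b * p b) x -
            pd i (fun x' => ∑ a, ∑ b, p a * A x' a b * p b) x *
              pd i (fun p' => ∑ a, ∑ b, p' a * B x a b * p' b) p) = 0)
    {x : Fin n → ℝ} (hx : x ∈ U) (p : Fin n → ℝ) :
    ∑ s, ∑ k, ∑ l, (∑ i, ((A x i s + A x s i) * pd i (fun y => B y k l) x
        - (B x i s + B x s i) * pd i (fun y => A y k l) x)) * p s * p k * p l = 0 := by
  have h0 := hP x hx p
  have hrw : ∀ i : Fin n,
      (pd i (fun p' => ∑ a, ∑ b, p' a * A x a b * p' b) p *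
          pd i (fun x' => ∑ a, ∑ b, p a * B x' a b * p b) x -
        pd i (fun x' => ∑ a, ∑ b, p a * A x' a b * p b) x *
          pd i (fun p' => ∑ a, ∑ b, p' a * B x a b * p' b) p)
      = ∑ s, ∑ k, ∑ l, ((A x i s + A x s i) * pd i (fun y => B y k l) x
          - (B x i s + B x s i) * pd i (fun y => A y k l) x) * p s * p k * p l := by
    intro i
    rw [pd_quad (A x) i p, pd_quad (B x) i p, pd_quadx hU B hB i p hx, pd_quadx hU A hA i p hx]
    have e1 : (∑ a, (A x i a + A x a i) * p a) * (∑ a, ∑ b, p a * pd i (fun y => B y a b) x * p b)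
        = ∑ s, ∑ k, ∑ l, (A x i s + A x s i) * pd i (fun y => B y k l) x * p s * p k * p l :=
      tri_mul (fun s => A x i s + A x s i) (fun k l => pd i (fun y => B y k l) x) p
    have e2 : (∑ a, (B x i a + B x a i) * p a) * (∑ a, ∑ b, p a * pd i (fun y => A y a b) x * p b)
        = ∑ s, ∑ k, ∑ l, (B x i s + B x s i) * pd i (fun y => A y k l) x * p s * p k * p l :=
      tri_mul (fun s => B x i s + B x s i) (fun k l => pd i (fun y => A y k l) x) p
    rw [mul_comm (∑ a, ∑ b, p a * pd i (fun y => A y a b) x * p b), e1, e2]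
    simp only [← Finset.sum_sub_distrib]
    refine Finset.sum_congr rfl fun s _ => Finset.sum_congr rfl fun k _ =>
      Finset.sum_congr rfl fun l _ => ?_
    ring
  rw [Finset.sum_congr rfl fun i _ => hrw i] at h0
  -- now move the i-sum inside
  rw [← h0]
  have push : ∀ s k l : Fin n, (∑ i, ((A x i s + A x s i) * pd i (fun y => B y k l) x
        - (B x i s + B x s i) * pd i (fun y => A y k l) x)) * p s * p k * p l
      = ∑ i, ((A x i s + A x s i) * pd i (fun y => B y k l) x
        - (B x i s + B x s i) * pd i (fun y => A y k l) x) * p s * p k * p l := by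
    intro s k l
    rw [Finset.sum_mul, Finset.sum_mul, Finset.sum_mul]
  rw [Finset.sum_congr rfl fun s _ => Finset.sum_congr rfl fun k _ =>
    Finset.sum_congr rfl fun l _ => push s k l]
  -- swap sums
  exact sum_swap_out _
end PdAux
end
noncomputable section
namespace PdAux

variable {n : ℕ} {U : Set (Fin n → ℝ)}

theorem expandAB (hU : IsOpen U) (A B : (Fin n → ℝ) → Matrix (Fin n) (Fin n) ℝ)
    (hA : ∀ i j, ContDiffOn ℝ (⊤ : ℕ∞) (fun y => A y i j) U)
    (hB : ∀ i j, ContDiffOn ℝ (⊤ : ℕ∞) (fun y => B y i j) U)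
    (f : (Fin n → ℝ) → ℝ) (hf : ContDiffOn ℝ (⊤ : ℕ∞) f U) {x : Fin n → ℝ} (hx : x ∈ U) :
    opPlain A (opPlain B f) x = ∑ i, ∑ j, ∑ k, ∑ l,
      (pd i (fun y => A y i j) x *
        ((pd j (pd k (fun y => B y k l)) x * pd l f x
          + pd k (fun y => B y k l) x * pd j (pd l f) x)
        + (pd j (fun y => B y k l) x * pd k (pd l f) x
          + B x k l * pd j (pd k (pd l f)) x))
      + A x i j *
        (((pd i (pd j (pd k (fun y => B y k l))) x * pd l f x
          + pd j (pd k (fun y => B y k l)) x * pd i (pd l f) x)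
        + (pd i (pd k (fun y => B y k l)) x * pd j (pd l f) x
          + pd k (fun y => B y k l) x * pd i (pd j (pd l f)) x))
        + ((pd i (pd j (fun y => B y k l)) x * pd k (pd l f) x
          + pd j (fun y => B y k l) x * pd i (pd k (pd l f)) x)
        + (pd i (fun y => B y k l) x * pd j (pd k (pd l f)) x
          + B x k l * pd i (pd j (pd k (pd l f))) x)))) := by
  -- smoothness facts
  have hpdf : ∀ l : Fin n, ContDiffOn ℝ (⊤ : ℕ∞) (pd l f) U := fun l => pd_contDiffOn hU hf
  have hpdf2 : ∀ k l : Fin n, ContDiffOn ℝ (⊤ : ℕ∞) (pd k (pd l f)) U :=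
    fun k l => pd_contDiffOn hU (hpdf l)
  have hg : ∀ k l : Fin n, ContDiffOn ℝ (⊤ : ℕ∞) (fun y => B y k l * pd l f y) U :=
    fun k l => (hB k l).mul (hpdf l)
  have hpg : ∀ k' k l : Fin n,
      ContDiffOn ℝ (⊤ : ℕ∞) (pd k' (fun y => B y k l * pd l f y)) U :=
    fun k' k l => pd_contDiffOn hU (hg k l)
  have hppg : ∀ j k' k l : Fin n,
      ContDiffOn ℝ (⊤ : ℕ∞) (pd j (pd k' (fun y => B y k l * pd l f y))) U :=
    fun j k' k l => pd_contDiffOn hU (hpg k' k l)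
  have hpB : ∀ i k l : Fin n, ContDiffOn ℝ (⊤ : ℕ∞) (pd i (fun y => B y k l)) U :=
    fun i k l => pd_contDiffOn hU (hB k l)
  have hppB : ∀ i j k l : Fin n,
      ContDiffOn ℝ (⊤ : ℕ∞) (pd i (pd j (fun y => B y k l))) U :=
    fun i j k l => pd_contDiffOn hU (hpB j k l)
  -- first order expansion
  have e1 : ∀ (k l : Fin n), ∀ y ∈ U, pd k (fun z => B z k l * pd l f z) y =
      pd k (fun z => B z k l) y * pd l f y + B y k l * pd k (pd l f) y := by
    intro k l y hy
    exact pd_mul (diffAt hU (hB k l) hy) (diffAt hU (hpdf l) hy)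
  -- second order expansion
  have e2 : ∀ (j k l : Fin n), ∀ y ∈ U, pd j (pd k (fun z => B z k l * pd l f z)) y =
      (pd j (pd k (fun z => B z k l)) y * pd l f y
        + pd k (fun z => B z k l) y * pd j (pd l f) y)
      + (pd j (fun z => B z k l) y * pd k (pd l f) y
        + B y k l * pd j (pd k (pd l f)) y) := by
    intro j k l y hy
    have h1 : pd j (pd k (fun z => B z k l * pd l f z)) y =
        pd j (fun z => pd k (fun w => B w k l) z * pd l f z + B z k l * pd k (pd l f) z) y :=
      pd_congrOn hU (e1 k l) hy
    rw [h1, pd_add ((diffAt hU (hpB k k l) hy).fun_mul (diffAt hU (hpdf l) hy))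
          ((diffAt hU (hB k l) hy).fun_mul (diffAt hU (hpdf2 k l) hy)),
        pd_mul (diffAt hU (hpB k k l) hy) (diffAt hU (hpdf l) hy),
        pd_mul (diffAt hU (hB k l) hy) (diffAt hU (hpdf2 k l) hy)]
  -- third order expansion
  have e3 : ∀ (i j k l : Fin n), ∀ y ∈ U, pd i (pd j (pd k (fun z => B z k l * pd l f z))) y =
      ((pd i (pd j (pd k (fun z => B z k l))) y * pd l f y
        + pd j (pd k (fun z => B z k l)) y * pd i (pd l f) y)
      + (pd i (pd k (fun z => B z k l)) y * pd j (pd l f) y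
        + pd k (fun z => B z k l) y * pd i (pd j (pd l f)) y))
      + ((pd i (pd j (fun z => B z k l)) y * pd k (pd l f) y
        + pd j (fun z => B z k l) y * pd i (pd k (pd l f)) y)
      + (pd i (fun z => B z k l) y * pd j (pd k (pd l f)) y
        + B y k l * pd i (pd j (pd k (pd l f))) y)) := by
    intro i j k l y hy
    have h1 : pd i (pd j (pd k (fun z => B z k l * pd l f z))) y =
        pd i (fun z =>
          (pd j (pd k (fun w => B w k l)) z * pd l f z
            + pd k (fun w => B w k l) z * pd j (pd l f) z)
          + (pd j (fun w => B w k l) z * pd k (pd l f) z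
            + B z k l * pd j (pd k (pd l f)) z)) y :=
      pd_congrOn hU (e2 j k l) hy
    have d1 : DifferentiableAt ℝ (fun z => pd j (pd k (fun w => B w k l)) z * pd l f z) y :=
      (diffAt hU (hppB j k k l) hy).mul (diffAt hU (hpdf l) hy)
    have d2 : DifferentiableAt ℝ (fun z => pd k (fun w => B w k l) z * pd j (pd l f) z) y :=
      (diffAt hU (hpB k k l) hy).mul (diffAt hU (hpdf2 j l) hy)
    have d3 : DifferentiableAt ℝ (fun z => pd j (fun w => B w k l) z * pd k (pd l f) z) y :=
      (diffAt hU (hpB j k l) hy).mul (diffAt hU (hpdf2 k l) hy)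
    have d4 : DifferentiableAt ℝ (fun z => B z k l * pd j (pd k (pd l f)) z) y :=
      (diffAt hU (hB k l) hy).mul (diffAt hU (pd_contDiffOn hU (hpdf2 k l)) hy)
    rw [h1, pd_add (d1.fun_add d2) (d3.fun_add d4), pd_add d1 d2, pd_add d3 d4,
        pd_mul (diffAt hU (hppB j k k l) hy) (diffAt hU (hpdf l) hy),
        pd_mul (diffAt hU (hpB k k l) hy) (diffAt hU (hpdf2 j l) hy),
        pd_mul (diffAt hU (hpB j k l) hy) (diffAt hU (hpdf2 k l) hy),
        pd_mul (diffAt hU (hB k l) hy) (diffAt hU (pd_contDiffOn hU (hpdf2 k l)) hy)]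
  -- step 3 : derivative of opPlain B f
  have hsum_inner : ∀ k : Fin n,
      ContDiffOn ℝ (⊤ : ℕ∞) (fun z => ∑ l, pd k (fun w => B w k l * pd l f w) z) U :=
    fun k => ContDiffOn.sum (fun l _ => hpg k k l)
  have hstep3 : ∀ j : Fin n, ∀ y ∈ U, pd j (opPlain B f) y =
      ∑ k, ∑ l, pd j (pd k (fun z => B z k l * pd l f z)) y := by
    intro j y hy
    show pd j (fun z => ∑ k, ∑ l, pd k (fun w => B w k l * pd l f w) z) y = _
    rw [pd_sum Finset.univ _ (fun k _ => diffAt hU (hsum_inner k) hy)]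
    exact Finset.sum_congr rfl fun k _ =>
      pd_sum Finset.univ _ (fun l _ => diffAt hU (hpg k k l) hy)
  -- step 4: assemble
  show (∑ i, ∑ j, pd i (fun y => A y i j * pd j (opPlain B f) y) x) = _
  refine Finset.sum_congr rfl fun i _ => ?_
  refine Finset.sum_congr rfl fun j _ => ?_
  have h4 : pd i (fun y => A y i j * pd j (opPlain B f) y) x =
      pd i (fun y => ∑ k, ∑ l,
        A y i j * pd j (pd k (fun z => B z k l * pd l f z)) y) x := by
    refine pd_congrOn hU (fun y hy => ?_) hx
    rw [hstep3 j y hy, Finset.mul_sum]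
    exact Finset.sum_congr rfl fun k _ => Finset.mul_sum ..
  rw [h4, pd_sum Finset.univ _ (fun k _ => diffAt hU
      (ContDiffOn.sum (fun l _ => (hA i j).mul (hppg j k k l))) hx)]
  refine Finset.sum_congr rfl fun k _ => ?_
  rw [pd_sum Finset.univ _ (fun l _ => diffAt hU ((hA i j).mul (hppg j k k l)) hx)]
  refine Finset.sum_congr rfl fun l _ => ?_
  rw [pd_mul (diffAt hU (hA i j) hx) (diffAt hU (hppg j k k l) hx),
      e2 j k l x hx, e3 i j k l x hx]

end PdAux
end
noncomputable section
namespace PdAux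

variable {n : ℕ} {U : Set (Fin n → ℝ)}

set_option maxHeartbeats 2000000 in
theorem ML2 (hU : IsOpen U) (A B : (Fin n → ℝ) → Matrix (Fin n) (Fin n) ℝ)
    (hA : ∀ i j, ContDiffOn ℝ (⊤ : ℕ∞) (fun y => A y i j) U)
    (hB : ∀ i j, ContDiffOn ℝ (⊤ : ℕ∞) (fun y => B y i j) U)
    (f : (Fin n → ℝ) → ℝ) (hf : ContDiffOn ℝ (⊤ : ℕ∞) f U)
    {x : Fin n → ℝ} (hx : x ∈ U)
    (hAx : ∀ a b, A x a b = A x b a) (hBx : ∀ a b, B x a b = B x b a)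
    (hcubic : ∀ p : Fin n → ℝ, ∑ s, ∑ k, ∑ l, (∑ i, ((A x i s + A x s i) * pd i (fun y => B y k l) x
        - (B x i s + B x s i) * pd i (fun y => A y k l) x)) * p s * p k * p l = 0) :
    (∑ i, ∑ j, ∑ k, ∑ l,
      (pd i (fun y => A y i j) x *
        ((pd j (pd k (fun y => B y k l)) x * pd l f x
          + pd k (fun y => B y k l) x * pd j (pd l f) x)
        + (pd j (fun y => B y k l) x * pd k (pd l f) x
          + B x k l * pd j (pd k (pd l f)) x))
      + A x i j *
        (((pd i (pd j (pd k (fun y => B y k l))) x * pd l f x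
          + pd j (pd k (fun y => B y k l)) x * pd i (pd l f) x)
        + (pd i (pd k (fun y => B y k l)) x * pd j (pd l f) x
          + pd k (fun y => B y k l) x * pd i (pd j (pd l f)) x))
        + ((pd i (pd j (fun y => B y k l)) x * pd k (pd l f) x
          + pd j (fun y => B y k l) x * pd i (pd k (pd l f)) x)
        + (pd i (fun y => B y k l) x * pd j (pd k (pd l f)) x
          + B x k l * pd i (pd j (pd k (pd l f))) x)))))
    - (∑ i, ∑ j, ∑ k, ∑ l,
      (pd i (fun y => B y i j) x *
        ((pd j (pd k (fun y => A y k l)) x * pd l f x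
          + pd k (fun y => A y k l) x * pd j (pd l f) x)
        + (pd j (fun y => A y k l) x * pd k (pd l f) x
          + A x k l * pd j (pd k (pd l f)) x))
      + B x i j *
        (((pd i (pd j (pd k (fun y => A y k l))) x * pd l f x
          + pd j (pd k (fun y => A y k l)) x * pd i (pd l f) x)
        + (pd i (pd k (fun y => A y k l)) x * pd j (pd l f) x
          + pd k (fun y => A y k l) x * pd i (pd j (pd l f)) x))
        + ((pd i (pd j (fun y => A y k l)) x * pd k (pd l f) x
          + pd j (fun y => A y k l) x * pd i (pd k (pd l f)) x)
        + (pd i (fun y => A y k l) x * pd j (pd k (pd l f)) x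
          + A x k l * pd i (pd j (pd k (pd l f))) x)))))
    = (∑ k, ∑ l, cc A B x k l * pd k (pd l f) x) + ∑ l, ww A B x l * pd l f x := by
  -- symmetry of iterated derivatives of f at x
  have hD2s : ∀ a b : Fin n, pd a (pd b f) x = pd b (pd a f) x :=
    fun a b => pd_comm hU hf hx
  have hD3a : ∀ a b c : Fin n, pd a (pd b (pd c f)) x = pd b (pd a (pd c f)) x :=
    fun a b c => pd_comm hU (pd_contDiffOn hU hf) hx
  have hD3b : ∀ a b c : Fin n, pd a (pd b (pd c f)) x = pd a (pd c (pd b f)) x :=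
    fun a b c => pd_congrOn hU (fun y hy => pd_comm hU hf hy) hx
  have hD3rot : ∀ a b c : Fin n, pd a (pd b (pd c f)) x = pd b (pd c (pd a f)) x :=
    fun a b c => (hD3a a b c).trans (hD3b b a c)
  have hs1 : ∀ a b c d : Fin n, pd a (pd b (pd c (pd d f))) x = pd b (pd a (pd c (pd d f))) x :=
    fun a b c d => pd_comm hU (pd_contDiffOn hU (pd_contDiffOn hU hf)) hx
  have hs2 : ∀ a b c d : Fin n, pd a (pd b (pd c (pd d f))) x = pd a (pd c (pd b (pd d f))) x :=
    fun a b c d => pd_congrOn hU (fun y hy => pd_comm hU (pd_contDiffOn hU hf) hy) hx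
  have hs3 : ∀ a b c d : Fin n, pd a (pd b (pd c (pd d f))) x = pd a (pd b (pd d (pd c f))) x :=
    fun a b c d => pd_congrOn hU (fun y hy => pd_congrOn hU (fun z hz => pd_comm hU hf hz) hy) hx
  have hD4 : ∀ a b c d : Fin n, pd a (pd b (pd c (pd d f))) x = pd c (pd d (pd a (pd b f))) x := by
    intro a b c d
    rw [hs2 a b c d, hs1 a c b d, hs3 c a b d, hs2 c a d b]
  have lhsA : (∑ i, ∑ j, ∑ k, ∑ l,
      (pd i (fun y => A y i j) x *
        ((pd j (pd k (fun y => B y k l)) x * pd l f x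
          + pd k (fun y => B y k l) x * pd j (pd l f) x)
        + (pd j (fun y => B y k l) x * pd k (pd l f) x
          + B x k l * pd j (pd k (pd l f)) x))
      + A x i j *
        (((pd i (pd j (pd k (fun y => B y k l))) x * pd l f x
          + pd j (pd k (fun y => B y k l)) x * pd i (pd l f) x)
        + (pd i (pd k (fun y => B y k l)) x * pd j (pd l f) x
          + pd k (fun y => B y k l) x * pd i (pd j (pd l f)) x))
        + ((pd i (pd j (fun y => B y k l)) x * pd k (pd l f) x
          + pd j (fun y => B y k l) x * pd i (pd k (pd l f)) x)
        + (pd i (fun y => B y k l) x * pd j (pd k (pd l f)) x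
          + B x k l * pd i (pd j (pd k (pd l f))) x)))))
      = (∑ p : Fin n × Fin n × Fin n × Fin n, pd p.1 (fun y => A y p.1 p.2.1) x * pd p.2.1 (pd p.2.2.1 (fun y => B y p.2.2.1 p.2.2.2)) x * pd p.2.2.2 f x)
      + (∑ p : Fin n × Fin n × Fin n × Fin n, pd p.1 (fun y => A y p.1 p.2.1) x * pd p.2.2.1 (fun y => B y p.2.2.1 p.2.2.2) x * pd p.2.1 (pd p.2.2.2 f) x)
      + (∑ p : Fin n × Fin n × Fin n × Fin n, pd p.1 (fun y => A y p.1 p.2.1) x * pd p.2.1 (fun y => B y p.2.2.1 p.2.2.2) x * pd p.2.2.1 (pd p.2.2.2 f) x)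
      + (∑ p : Fin n × Fin n × Fin n × Fin n, pd p.1 (fun y => A y p.1 p.2.1) x * B x p.2.2.1 p.2.2.2 * pd p.2.1 (pd p.2.2.1 (pd p.2.2.2 f)) x)
      + (∑ p : Fin n × Fin n × Fin n × Fin n, A x p.1 p.2.1 * pd p.1 (pd p.2.1 (pd p.2.2.1 (fun y => B y p.2.2.1 p.2.2.2))) x * pd p.2.2.2 f x)
      + (∑ p : Fin n × Fin n × Fin n × Fin n, A x p.1 p.2.1 * pd p.2.1 (pd p.2.2.1 (fun y => B y p.2.2.1 p.2.2.2)) x * pd p.1 (pd p.2.2.2 f) x)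
      + (∑ p : Fin n × Fin n × Fin n × Fin n, A x p.1 p.2.1 * pd p.1 (pd p.2.2.1 (fun y => B y p.2.2.1 p.2.2.2)) x * pd p.2.1 (pd p.2.2.2 f) x)
      + (∑ p : Fin n × Fin n × Fin n × Fin n, A x p.1 p.2.1 * pd p.2.2.1 (fun y => B y p.2.2.1 p.2.2.2) x * pd p.1 (pd p.2.1 (pd p.2.2.2 f)) x)
      + (∑ p : Fin n × Fin n × Fin n × Fin n, A x p.1 p.2.1 * pd p.1 (pd p.2.1 (fun y => B y p.2.2.1 p.2.2.2)) x * pd p.2.2.1 (pd p.2.2.2 f) x)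
      + (∑ p : Fin n × Fin n × Fin n × Fin n, A x p.1 p.2.1 * pd p.2.1 (fun y => B y p.2.2.1 p.2.2.2) x * pd p.1 (pd p.2.2.1 (pd p.2.2.2 f)) x)
      + (∑ p : Fin n × Fin n × Fin n × Fin n, A x p.1 p.2.1 * pd p.1 (fun y => B y p.2.2.1 p.2.2.2) x * pd p.2.1 (pd p.2.2.1 (pd p.2.2.2 f)) x)
      + (∑ p : Fin n × Fin n × Fin n × Fin n, A x p.1 p.2.1 * B x p.2.2.1 p.2.2.2 * pd p.1 (pd p.2.1 (pd p.2.2.1 (pd p.2.2.2 f))) x) := by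
    rw [nest4]
    symm
    simp only [← Finset.sum_add_distrib]
    refine Finset.sum_congr rfl fun p _ => ?_
    ring
  have lhsB : (∑ i, ∑ j, ∑ k, ∑ l,
      (pd i (fun y => B y i j) x *
        ((pd j (pd k (fun y => A y k l)) x * pd l f x
          + pd k (fun y => A y k l) x * pd j (pd l f) x)
        + (pd j (fun y => A y k l) x * pd k (pd l f) x
          + A x k l * pd j (pd k (pd l f)) x))
      + B x i j *
        (((pd i (pd j (pd k (fun y => A y k l))) x * pd l f x
          + pd j (pd k (fun y => A y k l)) x * pd i (pd l f) x)
        + (pd i (pd k (fun y => A y k l)) x * pd j (pd l f) x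
          + pd k (fun y => A y k l) x * pd i (pd j (pd l f)) x))
        + ((pd i (pd j (fun y => A y k l)) x * pd k (pd l f) x
          + pd j (fun y => A y k l) x * pd i (pd k (pd l f)) x)
        + (pd i (fun y => A y k l) x * pd j (pd k (pd l f)) x
          + A x k l * pd i (pd j (pd k (pd l f))) x)))))
      = (∑ p : Fin n × Fin n × Fin n × Fin n, pd p.1 (fun y => B y p.1 p.2.1) x * pd p.2.1 (pd p.2.2.1 (fun y => A y p.2.2.1 p.2.2.2)) x * pd p.2.2.2 f x)
      + (∑ p : Fin n × Fin n × Fin n × Fin n, pd p.1 (fun y => B y p.1 p.2.1) x * pd p.2.2.1 (fun y => A y p.2.2.1 p.2.2.2) x * pd p.2.1 (pd p.2.2.2 f) x)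
      + (∑ p : Fin n × Fin n × Fin n × Fin n, pd p.1 (fun y => B y p.1 p.2.1) x * pd p.2.1 (fun y => A y p.2.2.1 p.2.2.2) x * pd p.2.2.1 (pd p.2.2.2 f) x)
      + (∑ p : Fin n × Fin n × Fin n × Fin n, pd p.1 (fun y => B y p.1 p.2.1) x * A x p.2.2.1 p.2.2.2 * pd p.2.1 (pd p.2.2.1 (pd p.2.2.2 f)) x)
      + (∑ p : Fin n × Fin n × Fin n × Fin n, B x p.1 p.2.1 * pd p.1 (pd p.2.1 (pd p.2.2.1 (fun y => A y p.2.2.1 p.2.2.2))) x * pd p.2.2.2 f x)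
      + (∑ p : Fin n × Fin n × Fin n × Fin n, B x p.1 p.2.1 * pd p.2.1 (pd p.2.2.1 (fun y => A y p.2.2.1 p.2.2.2)) x * pd p.1 (pd p.2.2.2 f) x)
      + (∑ p : Fin n × Fin n × Fin n × Fin n, B x p.1 p.2.1 * pd p.1 (pd p.2.2.1 (fun y => A y p.2.2.1 p.2.2.2)) x * pd p.2.1 (pd p.2.2.2 f) x)
      + (∑ p : Fin n × Fin n × Fin n × Fin n, B x p.1 p.2.1 * pd p.2.2.1 (fun y => A y p.2.2.1 p.2.2.2) x * pd p.1 (pd p.2.1 (pd p.2.2.2 f)) x)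
      + (∑ p : Fin n × Fin n × Fin n × Fin n, B x p.1 p.2.1 * pd p.1 (pd p.2.1 (fun y => A y p.2.2.1 p.2.2.2)) x * pd p.2.2.1 (pd p.2.2.2 f) x)
      + (∑ p : Fin n × Fin n × Fin n × Fin n, B x p.1 p.2.1 * pd p.2.1 (fun y => A y p.2.2.1 p.2.2.2) x * pd p.1 (pd p.2.2.1 (pd p.2.2.2 f)) x)
      + (∑ p : Fin n × Fin n × Fin n × Fin n, B x p.1 p.2.1 * pd p.1 (fun y => A y p.2.2.1 p.2.2.2) x * pd p.2.1 (pd p.2.2.1 (pd p.2.2.2 f)) x)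
      + (∑ p : Fin n × Fin n × Fin n × Fin n, B x p.1 p.2.1 * A x p.2.2.1 p.2.2.2 * pd p.1 (pd p.2.1 (pd p.2.2.1 (pd p.2.2.2 f))) x) := by
    rw [nest4]
    symm
    simp only [← Finset.sum_add_distrib]
    refine Finset.sum_congr rfl fun p _ => ?_
    ring
  have rhs1 : (∑ k, ∑ l, cc A B x k l * pd k (pd l f) x)
      = (∑ p : Fin n × Fin n × Fin n × Fin n, A x p.2.2.1 p.2.2.2 * pd p.2.2.1 (pd p.2.2.2 (fun y => B y p.1 p.2.1)) x * pd p.1 (pd p.2.1 f) x)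
      - (∑ p : Fin n × Fin n × Fin n × Fin n, B x p.2.2.1 p.2.2.2 * pd p.2.2.1 (pd p.2.2.2 (fun y => A y p.1 p.2.1)) x * pd p.1 (pd p.2.1 f) x)
      + (∑ p : Fin n × Fin n × Fin n × Fin n, pd p.2.2.1 (fun y => A y p.2.2.1 p.2.2.2) x * pd p.2.2.2 (fun y => B y p.1 p.2.1) x * pd p.1 (pd p.2.1 f) x)
      - (∑ p : Fin n × Fin n × Fin n × Fin n, pd p.2.2.1 (fun y => B y p.2.2.1 p.2.2.2) x * pd p.2.2.2 (fun y => A y p.1 p.2.1) x * pd p.1 (pd p.2.1 f) x)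
      + (∑ p : Fin n × Fin n × Fin n × Fin n, pd p.2.2.1 (fun y => A y p.2.2.1 p.1) x * pd p.2.2.2 (fun y => B y p.2.2.2 p.2.1) x * pd p.1 (pd p.2.1 f) x)
      - (∑ p : Fin n × Fin n × Fin n × Fin n, pd p.2.2.1 (fun y => B y p.2.2.1 p.1) x * pd p.2.2.2 (fun y => A y p.2.2.2 p.2.1) x * pd p.1 (pd p.2.1 f) x)
      + (∑ p : Fin n × Fin n × Fin n × Fin n, A x p.1 p.2.2.2 * pd p.2.2.2 (pd p.2.2.1 (fun y => B y p.2.2.1 p.2.1)) x * pd p.1 (pd p.2.1 f) x)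
      - (∑ p : Fin n × Fin n × Fin n × Fin n, B x p.1 p.2.2.2 * pd p.2.2.2 (pd p.2.2.1 (fun y => A y p.2.2.1 p.2.1)) x * pd p.1 (pd p.2.1 f) x)
      + (∑ p : Fin n × Fin n × Fin n × Fin n, A x p.2.2.1 p.1 * pd p.2.2.1 (pd p.2.2.2 (fun y => B y p.2.2.2 p.2.1)) x * pd p.1 (pd p.2.1 f) x)
      - (∑ p : Fin n × Fin n × Fin n × Fin n, B x p.2.2.1 p.1 * pd p.2.2.1 (pd p.2.2.2 (fun y => A y p.2.2.2 p.2.1)) x * pd p.1 (pd p.2.1 f) x) := by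
    simp only [cc]
    have step : (∑ k, ∑ l, (∑ i, ∑ j,
        (A x i j * pd i (pd j (fun y => B y k l)) x - B x i j * pd i (pd j (fun y => A y k l)) x
     + (pd i (fun y => A y i j) x * pd j (fun y => B y k l) x
        - pd i (fun y => B y i j) x * pd j (fun y => A y k l) x)
     + (pd i (fun y => A y i k) x * pd j (fun y => B y j l) x
        - pd i (fun y => B y i k) x * pd j (fun y => A y j l) x)
     + (A x k j * pd j (pd i (fun y => B y i l)) x - B x k j * pd j (pd i (fun y => A y i l)) x)
     + (A x i k * pd i (pd j (fun y => B y j l)) x - B x i k * pd i (pd j (fun y => A y j l)) x))) * pd k (pd l f) x)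
        = ∑ k, ∑ l, ∑ i, ∑ j,
        ((A x i j * pd i (pd j (fun y => B y k l)) x - B x i j * pd i (pd j (fun y => A y k l)) x
     + (pd i (fun y => A y i j) x * pd j (fun y => B y k l) x
        - pd i (fun y => B y i j) x * pd j (fun y => A y k l) x)
     + (pd i (fun y => A y i k) x * pd j (fun y => B y j l) x
        - pd i (fun y => B y i k) x * pd j (fun y => A y j l) x)
     + (A x k j * pd j (pd i (fun y => B y i l)) x - B x k j * pd j (pd i (fun y => A y i l)) x)
     + (A x i k * pd i (pd j (fun y => B y j l)) x - B x i k * pd i (pd j (fun y => A y j l)) x)) * pd k (pd l f) x) := by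
      refine Finset.sum_congr rfl fun k _ => Finset.sum_congr rfl fun l _ => ?_
      rw [Finset.sum_mul]
      exact Finset.sum_congr rfl fun i _ => Finset.sum_mul ..
    rw [step, nest4]
    symm
    simp only [← Finset.sum_sub_distrib, ← Finset.sum_add_distrib]
    refine Finset.sum_congr rfl fun p _ => ?_
    ring
  have rhs2 : (∑ l, ww A B x l * pd l f x)
      = (∑ p : Fin n × Fin n × Fin n × Fin n, pd p.2.1 (fun y => A y p.2.1 p.2.2.1) x * pd p.2.2.1 (pd p.2.2.2 (fun y => B y p.2.2.2 p.1)) x * pd p.1 f x)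
      + (∑ p : Fin n × Fin n × Fin n × Fin n, A x p.2.1 p.2.2.1 * pd p.2.1 (pd p.2.2.1 (pd p.2.2.2 (fun y => B y p.2.2.2 p.1))) x * pd p.1 f x)
      - (∑ p : Fin n × Fin n × Fin n × Fin n, pd p.2.1 (fun y => B y p.2.1 p.2.2.1) x * pd p.2.2.1 (pd p.2.2.2 (fun y => A y p.2.2.2 p.1)) x * pd p.1 f x)
      - (∑ p : Fin n × Fin n × Fin n × Fin n, B x p.2.1 p.2.2.1 * pd p.2.1 (pd p.2.2.1 (pd p.2.2.2 (fun y => A y p.2.2.2 p.1))) x * pd p.1 f x) := by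
    simp only [ww]
    have step : (∑ l, (∑ i, ∑ j, ∑ k,
        (pd i (fun y => A y i j) x * pd j (pd k (fun y => B y k l)) x
     + A x i j * pd i (pd j (pd k (fun y => B y k l))) x
     - pd i (fun y => B y i j) x * pd j (pd k (fun y => A y k l)) x
     - B x i j * pd i (pd j (pd k (fun y => A y k l))) x)) * pd l f x)
        = ∑ l, ∑ i, ∑ j, ∑ k,
        ((pd i (fun y => A y i j) x * pd j (pd k (fun y => B y k l)) x
     + A x i j * pd i (pd j (pd k (fun y => B y k l))) x
     - pd i (fun y => B y i j) x * pd j (pd k (fun y => A y k l)) x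
     - B x i j * pd i (pd j (pd k (fun y => A y k l))) x) * pd l f x) := by
      refine Finset.sum_congr rfl fun l _ => ?_
      rw [Finset.sum_mul]
      refine Finset.sum_congr rfl fun i _ => ?_
      rw [Finset.sum_mul]
      exact Finset.sum_congr rfl fun j _ => Finset.sum_mul ..
    rw [step, nest4]
    symm
    simp only [← Finset.sum_sub_distrib, ← Finset.sum_add_distrib]
    refine Finset.sum_congr rfl fun p _ => ?_
    ring
  have pair1ab : (∑ p : Fin n × Fin n × Fin n × Fin n, pd p.1 (fun y => A y p.1 p.2.1) x * pd p.2.1 (pd p.2.2.1 (fun y => B y p.2.2.1 p.2.2.2)) x * pd p.2.2.2 f x) = (∑ p : Fin n × Fin n × Fin n × Fin n, pd p.2.1 (fun y => A y p.2.1 p.2.2.1) x * pd p.2.2.1 (pd p.2.2.2 (fun y => B y p.2.2.2 p.1)) x * pd p.1 f x) := by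
    refine Fintype.sum_bijective (fun p : Fin n × Fin n × Fin n × Fin n => (p.2.2.2, p.1, p.2.1, p.2.2.1))
      (Equiv.mk (fun p : Fin n × Fin n × Fin n × Fin n => (p.2.2.2, p.1, p.2.1, p.2.2.1)) (fun p : Fin n × Fin n × Fin n × Fin n => (p.2.1, p.2.2.1, p.2.2.2, p.1))
        (fun p => rfl) (fun p => rfl)).bijective _ _ fun p => ?_
    rfl
  have pair1ba : (∑ p : Fin n × Fin n × Fin n × Fin n, pd p.1 (fun y => B y p.1 p.2.1) x * pd p.2.1 (pd p.2.2.1 (fun y => A y p.2.2.1 p.2.2.2)) x * pd p.2.2.2 f x) = (∑ p : Fin n × Fin n × Fin n × Fin n, pd p.2.1 (fun y => B y p.2.1 p.2.2.1) x * pd p.2.2.1 (pd p.2.2.2 (fun y => A y p.2.2.2 p.1)) x * pd p.1 f x) := by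
    refine Fintype.sum_bijective (fun p : Fin n × Fin n × Fin n × Fin n => (p.2.2.2, p.1, p.2.1, p.2.2.1))
      (Equiv.mk (fun p : Fin n × Fin n × Fin n × Fin n => (p.2.2.2, p.1, p.2.1, p.2.2.1)) (fun p : Fin n × Fin n × Fin n × Fin n => (p.2.1, p.2.2.1, p.2.2.2, p.1))
        (fun p => rfl) (fun p => rfl)).bijective _ _ fun p => ?_
    rfl
  have pair5ab : (∑ p : Fin n × Fin n × Fin n × Fin n, A x p.1 p.2.1 * pd p.1 (pd p.2.1 (pd p.2.2.1 (fun y => B y p.2.2.1 p.2.2.2))) x * pd p.2.2.2 f x) = (∑ p : Fin n × Fin n × Fin n × Fin n, A x p.2.1 p.2.2.1 * pd p.2.1 (pd p.2.2.1 (pd p.2.2.2 (fun y => B y p.2.2.2 p.1))) x * pd p.1 f x) := by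
    refine Fintype.sum_bijective (fun p : Fin n × Fin n × Fin n × Fin n => (p.2.2.2, p.1, p.2.1, p.2.2.1))
      (Equiv.mk (fun p : Fin n × Fin n × Fin n × Fin n => (p.2.2.2, p.1, p.2.1, p.2.2.1)) (fun p : Fin n × Fin n × Fin n × Fin n => (p.2.1, p.2.2.1, p.2.2.2, p.1))
        (fun p => rfl) (fun p => rfl)).bijective _ _ fun p => ?_
    rfl
  have pair5ba : (∑ p : Fin n × Fin n × Fin n × Fin n, B x p.1 p.2.1 * pd p.1 (pd p.2.1 (pd p.2.2.1 (fun y => A y p.2.2.1 p.2.2.2))) x * pd p.2.2.2 f x) = (∑ p : Fin n × Fin n × Fin n × Fin n, B x p.2.1 p.2.2.1 * pd p.2.1 (pd p.2.2.1 (pd p.2.2.2 (fun y => A y p.2.2.2 p.1))) x * pd p.1 f x) := by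
    refine Fintype.sum_bijective (fun p : Fin n × Fin n × Fin n × Fin n => (p.2.2.2, p.1, p.2.1, p.2.2.1))
      (Equiv.mk (fun p : Fin n × Fin n × Fin n × Fin n => (p.2.2.2, p.1, p.2.1, p.2.2.1)) (fun p : Fin n × Fin n × Fin n × Fin n => (p.2.1, p.2.2.1, p.2.2.2, p.1))
        (fun p => rfl) (fun p => rfl)).bijective _ _ fun p => ?_
    rfl
  have pair9ab : (∑ p : Fin n × Fin n × Fin n × Fin n, A x p.1 p.2.1 * pd p.1 (pd p.2.1 (fun y => B y p.2.2.1 p.2.2.2)) x * pd p.2.2.1 (pd p.2.2.2 f) x) = (∑ p : Fin n × Fin n × Fin n × Fin n, A x p.2.2.1 p.2.2.2 * pd p.2.2.1 (pd p.2.2.2 (fun y => B y p.1 p.2.1)) x * pd p.1 (pd p.2.1 f) x) := by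
    refine Fintype.sum_bijective (fun p : Fin n × Fin n × Fin n × Fin n => (p.2.2.1, p.2.2.2, p.1, p.2.1))
      (Equiv.mk (fun p : Fin n × Fin n × Fin n × Fin n => (p.2.2.1, p.2.2.2, p.1, p.2.1)) (fun p : Fin n × Fin n × Fin n × Fin n => (p.2.2.1, p.2.2.2, p.1, p.2.1))
        (fun p => rfl) (fun p => rfl)).bijective _ _ fun p => ?_
    rfl
  have pair9ba : (∑ p : Fin n × Fin n × Fin n × Fin n, B x p.1 p.2.1 * pd p.1 (pd p.2.1 (fun y => A y p.2.2.1 p.2.2.2)) x * pd p.2.2.1 (pd p.2.2.2 f) x) = (∑ p : Fin n × Fin n × Fin n × Fin n, B x p.2.2.1 p.2.2.2 * pd p.2.2.1 (pd p.2.2.2 (fun y => A y p.1 p.2.1)) x * pd p.1 (pd p.2.1 f) x) := by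
    refine Fintype.sum_bijective (fun p : Fin n × Fin n × Fin n × Fin n => (p.2.2.1, p.2.2.2, p.1, p.2.1))
      (Equiv.mk (fun p : Fin n × Fin n × Fin n × Fin n => (p.2.2.1, p.2.2.2, p.1, p.2.1)) (fun p : Fin n × Fin n × Fin n × Fin n => (p.2.2.1, p.2.2.2, p.1, p.2.1))
        (fun p => rfl) (fun p => rfl)).bijective _ _ fun p => ?_
    rfl
  have pair3ab : (∑ p : Fin n × Fin n × Fin n × Fin n, pd p.1 (fun y => A y p.1 p.2.1) x * pd p.2.1 (fun y => B y p.2.2.1 p.2.2.2) x * pd p.2.2.1 (pd p.2.2.2 f) x) = (∑ p : Fin n × Fin n × Fin n × Fin n, pd p.2.2.1 (fun y => A y p.2.2.1 p.2.2.2) x * pd p.2.2.2 (fun y => B y p.1 p.2.1) x * pd p.1 (pd p.2.1 f) x) := by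
    refine Fintype.sum_bijective (fun p : Fin n × Fin n × Fin n × Fin n => (p.2.2.1, p.2.2.2, p.1, p.2.1))
      (Equiv.mk (fun p : Fin n × Fin n × Fin n × Fin n => (p.2.2.1, p.2.2.2, p.1, p.2.1)) (fun p : Fin n × Fin n × Fin n × Fin n => (p.2.2.1, p.2.2.2, p.1, p.2.1))
        (fun p => rfl) (fun p => rfl)).bijective _ _ fun p => ?_
    rfl
  have pair3ba : (∑ p : Fin n × Fin n × Fin n × Fin n, pd p.1 (fun y => B y p.1 p.2.1) x * pd p.2.1 (fun y => A y p.2.2.1 p.2.2.2) x * pd p.2.2.1 (pd p.2.2.2 f) x) = (∑ p : Fin n × Fin n × Fin n × Fin n, pd p.2.2.1 (fun y => B y p.2.2.1 p.2.2.2) x * pd p.2.2.2 (fun y => A y p.1 p.2.1) x * pd p.1 (pd p.2.1 f) x) := by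
    refine Fintype.sum_bijective (fun p : Fin n × Fin n × Fin n × Fin n => (p.2.2.1, p.2.2.2, p.1, p.2.1))
      (Equiv.mk (fun p : Fin n × Fin n × Fin n × Fin n => (p.2.2.1, p.2.2.2, p.1, p.2.1)) (fun p : Fin n × Fin n × Fin n × Fin n => (p.2.2.1, p.2.2.2, p.1, p.2.1))
        (fun p => rfl) (fun p => rfl)).bijective _ _ fun p => ?_
    rfl
  have pair2ab : (∑ p : Fin n × Fin n × Fin n × Fin n, pd p.1 (fun y => A y p.1 p.2.1) x * pd p.2.2.1 (fun y => B y p.2.2.1 p.2.2.2) x * pd p.2.1 (pd p.2.2.2 f) x) = (∑ p : Fin n × Fin n × Fin n × Fin n, pd p.2.2.1 (fun y => A y p.2.2.1 p.1) x * pd p.2.2.2 (fun y => B y p.2.2.2 p.2.1) x * pd p.1 (pd p.2.1 f) x) := by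
    refine Fintype.sum_bijective (fun p : Fin n × Fin n × Fin n × Fin n => (p.2.1, p.2.2.2, p.1, p.2.2.1))
      (Equiv.mk (fun p : Fin n × Fin n × Fin n × Fin n => (p.2.1, p.2.2.2, p.1, p.2.2.1)) (fun p : Fin n × Fin n × Fin n × Fin n => (p.2.2.1, p.1, p.2.2.2, p.2.1))
        (fun p => rfl) (fun p => rfl)).bijective _ _ fun p => ?_
    rfl
  have pair2ba : (∑ p : Fin n × Fin n × Fin n × Fin n, pd p.1 (fun y => B y p.1 p.2.1) x * pd p.2.2.1 (fun y => A y p.2.2.1 p.2.2.2) x * pd p.2.1 (pd p.2.2.2 f) x) = (∑ p : Fin n × Fin n × Fin n × Fin n, pd p.2.2.1 (fun y => B y p.2.2.1 p.1) x * pd p.2.2.2 (fun y => A y p.2.2.2 p.2.1) x * pd p.1 (pd p.2.1 f) x) := by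
    refine Fintype.sum_bijective (fun p : Fin n × Fin n × Fin n × Fin n => (p.2.1, p.2.2.2, p.1, p.2.2.1))
      (Equiv.mk (fun p : Fin n × Fin n × Fin n × Fin n => (p.2.1, p.2.2.2, p.1, p.2.2.1)) (fun p : Fin n × Fin n × Fin n × Fin n => (p.2.2.1, p.1, p.2.2.2, p.2.1))
        (fun p => rfl) (fun p => rfl)).bijective _ _ fun p => ?_
    rfl
  have pair6ab : (∑ p : Fin n × Fin n × Fin n × Fin n, A x p.1 p.2.1 * pd p.2.1 (pd p.2.2.1 (fun y => B y p.2.2.1 p.2.2.2)) x * pd p.1 (pd p.2.2.2 f) x) = (∑ p : Fin n × Fin n × Fin n × Fin n, A x p.1 p.2.2.2 * pd p.2.2.2 (pd p.2.2.1 (fun y => B y p.2.2.1 p.2.1)) x * pd p.1 (pd p.2.1 f) x) := by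
    refine Fintype.sum_bijective (fun p : Fin n × Fin n × Fin n × Fin n => (p.1, p.2.2.2, p.2.2.1, p.2.1))
      (Equiv.mk (fun p : Fin n × Fin n × Fin n × Fin n => (p.1, p.2.2.2, p.2.2.1, p.2.1)) (fun p : Fin n × Fin n × Fin n × Fin n => (p.1, p.2.2.2, p.2.2.1, p.2.1))
        (fun p => rfl) (fun p => rfl)).bijective _ _ fun p => ?_
    rfl
  have pair6ba : (∑ p : Fin n × Fin n × Fin n × Fin n, B x p.1 p.2.1 * pd p.2.1 (pd p.2.2.1 (fun y => A y p.2.2.1 p.2.2.2)) x * pd p.1 (pd p.2.2.2 f) x) = (∑ p : Fin n × Fin n × Fin n × Fin n, B x p.1 p.2.2.2 * pd p.2.2.2 (pd p.2.2.1 (fun y => A y p.2.2.1 p.2.1)) x * pd p.1 (pd p.2.1 f) x) := by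
    refine Fintype.sum_bijective (fun p : Fin n × Fin n × Fin n × Fin n => (p.1, p.2.2.2, p.2.2.1, p.2.1))
      (Equiv.mk (fun p : Fin n × Fin n × Fin n × Fin n => (p.1, p.2.2.2, p.2.2.1, p.2.1)) (fun p : Fin n × Fin n × Fin n × Fin n => (p.1, p.2.2.2, p.2.2.1, p.2.1))
        (fun p => rfl) (fun p => rfl)).bijective _ _ fun p => ?_
    rfl
  have pair7ab : (∑ p : Fin n × Fin n × Fin n × Fin n, A x p.1 p.2.1 * pd p.1 (pd p.2.2.1 (fun y => B y p.2.2.1 p.2.2.2)) x * pd p.2.1 (pd p.2.2.2 f) x) = (∑ p : Fin n × Fin n × Fin n × Fin n, A x p.2.2.1 p.1 * pd p.2.2.1 (pd p.2.2.2 (fun y => B y p.2.2.2 p.2.1)) x * pd p.1 (pd p.2.1 f) x) := by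
    refine Fintype.sum_bijective (fun p : Fin n × Fin n × Fin n × Fin n => (p.2.1, p.2.2.2, p.1, p.2.2.1))
      (Equiv.mk (fun p : Fin n × Fin n × Fin n × Fin n => (p.2.1, p.2.2.2, p.1, p.2.2.1)) (fun p : Fin n × Fin n × Fin n × Fin n => (p.2.2.1, p.1, p.2.2.2, p.2.1))
        (fun p => rfl) (fun p => rfl)).bijective _ _ fun p => ?_
    rfl
  have pair7ba : (∑ p : Fin n × Fin n × Fin n × Fin n, B x p.1 p.2.1 * pd p.1 (pd p.2.2.1 (fun y => A y p.2.2.1 p.2.2.2)) x * pd p.2.1 (pd p.2.2.2 f) x) = (∑ p : Fin n × Fin n × Fin n × Fin n, B x p.2.2.1 p.1 * pd p.2.2.1 (pd p.2.2.2 (fun y => A y p.2.2.2 p.2.1)) x * pd p.1 (pd p.2.1 f) x) := by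
    refine Fintype.sum_bijective (fun p : Fin n × Fin n × Fin n × Fin n => (p.2.1, p.2.2.2, p.1, p.2.2.1))
      (Equiv.mk (fun p : Fin n × Fin n × Fin n × Fin n => (p.2.1, p.2.2.2, p.1, p.2.2.1)) (fun p : Fin n × Fin n × Fin n × Fin n => (p.2.2.1, p.1, p.2.2.2, p.2.1))
        (fun p => rfl) (fun p => rfl)).bijective _ _ fun p => ?_
    rfl
  have cancel4ab : (∑ p : Fin n × Fin n × Fin n × Fin n, pd p.1 (fun y => A y p.1 p.2.1) x * B x p.2.2.1 p.2.2.2 * pd p.2.1 (pd p.2.2.1 (pd p.2.2.2 f)) x) = (∑ p : Fin n × Fin n × Fin n × Fin n, B x p.1 p.2.1 * pd p.2.2.1 (fun y => A y p.2.2.1 p.2.2.2) x * pd p.1 (pd p.2.1 (pd p.2.2.2 f)) x) := by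
    refine Fintype.sum_bijective (fun p : Fin n × Fin n × Fin n × Fin n => (p.2.2.1, p.2.2.2, p.1, p.2.1))
      (Equiv.mk (fun p : Fin n × Fin n × Fin n × Fin n => (p.2.2.1, p.2.2.2, p.1, p.2.1)) (fun p : Fin n × Fin n × Fin n × Fin n => (p.2.2.1, p.2.2.2, p.1, p.2.1))
        (fun p => rfl) (fun p => rfl)).bijective _ _ fun p => ?_
    rw [hD3rot p.2.1 p.2.2.1 p.2.2.2]
    ring
  have cancel4ba : (∑ p : Fin n × Fin n × Fin n × Fin n, pd p.1 (fun y => B y p.1 p.2.1) x * A x p.2.2.1 p.2.2.2 * pd p.2.1 (pd p.2.2.1 (pd p.2.2.2 f)) x) = (∑ p : Fin n × Fin n × Fin n × Fin n, A x p.1 p.2.1 * pd p.2.2.1 (fun y => B y p.2.2.1 p.2.2.2) x * pd p.1 (pd p.2.1 (pd p.2.2.2 f)) x) := by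
    refine Fintype.sum_bijective (fun p : Fin n × Fin n × Fin n × Fin n => (p.2.2.1, p.2.2.2, p.1, p.2.1))
      (Equiv.mk (fun p : Fin n × Fin n × Fin n × Fin n => (p.2.2.1, p.2.2.2, p.1, p.2.1)) (fun p : Fin n × Fin n × Fin n × Fin n => (p.2.2.1, p.2.2.2, p.1, p.2.1))
        (fun p => rfl) (fun p => rfl)).bijective _ _ fun p => ?_
    rw [hD3rot p.2.1 p.2.2.1 p.2.2.2]
    ring
  have cancel12 : (∑ p : Fin n × Fin n × Fin n × Fin n, A x p.1 p.2.1 * B x p.2.2.1 p.2.2.2 * pd p.1 (pd p.2.1 (pd p.2.2.1 (pd p.2.2.2 f))) x) = (∑ p : Fin n × Fin n × Fin n × Fin n, B x p.1 p.2.1 * A x p.2.2.1 p.2.2.2 * pd p.1 (pd p.2.1 (pd p.2.2.1 (pd p.2.2.2 f))) x) := by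
    refine Fintype.sum_bijective (fun p : Fin n × Fin n × Fin n × Fin n => (p.2.2.1, p.2.2.2, p.1, p.2.1))
      (Equiv.mk (fun p : Fin n × Fin n × Fin n × Fin n => (p.2.2.1, p.2.2.2, p.1, p.2.1)) (fun p : Fin n × Fin n × Fin n × Fin n => (p.2.2.1, p.2.2.2, p.1, p.2.1))
        (fun p => rfl) (fun p => rfl)).bijective _ _ fun p => ?_
    rw [hD4 p.1 p.2.1 p.2.2.1 p.2.2.2]
    ring
  have pair1011ab : (∑ p : Fin n × Fin n × Fin n × Fin n, A x p.1 p.2.1 * pd p.2.1 (fun y => B y p.2.2.1 p.2.2.2) x * pd p.1 (pd p.2.2.1 (pd p.2.2.2 f)) x) = (∑ p : Fin n × Fin n × Fin n × Fin n, A x p.1 p.2.1 * pd p.1 (fun y => B y p.2.2.1 p.2.2.2) x * pd p.2.1 (pd p.2.2.1 (pd p.2.2.2 f)) x) := by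
    refine Fintype.sum_bijective (fun p : Fin n × Fin n × Fin n × Fin n => (p.2.1, p.1, p.2.2.1, p.2.2.2))
      (Equiv.mk (fun p : Fin n × Fin n × Fin n × Fin n => (p.2.1, p.1, p.2.2.1, p.2.2.2)) (fun p : Fin n × Fin n × Fin n × Fin n => (p.2.1, p.1, p.2.2.1, p.2.2.2))
        (fun p => rfl) (fun p => rfl)).bijective _ _ fun p => ?_
    rw [hAx p.1 p.2.1]
  have pair1011ba : (∑ p : Fin n × Fin n × Fin n × Fin n, B x p.1 p.2.1 * pd p.2.1 (fun y => A y p.2.2.1 p.2.2.2) x * pd p.1 (pd p.2.2.1 (pd p.2.2.2 f)) x) = (∑ p : Fin n × Fin n × Fin n × Fin n, B x p.1 p.2.1 * pd p.1 (fun y => A y p.2.2.1 p.2.2.2) x * pd p.2.1 (pd p.2.2.1 (pd p.2.2.2 f)) x) := by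
    refine Fintype.sum_bijective (fun p : Fin n × Fin n × Fin n × Fin n => (p.2.1, p.1, p.2.2.1, p.2.2.2))
      (Equiv.mk (fun p : Fin n × Fin n × Fin n × Fin n => (p.2.1, p.1, p.2.2.1, p.2.2.2)) (fun p : Fin n × Fin n × Fin n × Fin n => (p.2.1, p.1, p.2.2.1, p.2.2.2))
        (fun p => rfl) (fun p => rfl)).bijective _ _ fun p => ?_
    rw [hBx p.1 p.2.1]
  have hT := polarize (fun s k l => ∑ i, ((A x i s + A x s i) * pd i (fun y => B y k l) x
      - (B x i s + B x s i) * pd i (fun y => A y k l) x)) hcubic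
  have hcz := contract_zero (fun s k l => ∑ i, ((A x i s + A x s i) * pd i (fun y => B y k l) x
      - (B x i s + B x s i) * pd i (fun y => A y k l) x))
    (fun a b c => pd a (pd b (pd c f)) x) hT hD3b hD3a
  have hlink : (∑ s, ∑ k, ∑ l, (∑ i, ((A x i s + A x s i) * pd i (fun y => B y k l) x
      - (B x i s + B x s i) * pd i (fun y => A y k l) x)) * pd s (pd k (pd l f)) x)
      = 2 * (∑ p : Fin n × Fin n × Fin n × Fin n, A x p.1 p.2.1 * pd p.1 (fun y => B y p.2.2.1 p.2.2.2) x * pd p.2.1 (pd p.2.2.1 (pd p.2.2.2 f)) x) - 2 * (∑ p : Fin n × Fin n × Fin n × Fin n, B x p.1 p.2.1 * pd p.1 (fun y => A y p.2.2.1 p.2.2.2) x * pd p.2.1 (pd p.2.2.1 (pd p.2.2.2 f)) x) := by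
    have step : (∑ s, ∑ k, ∑ l, (∑ i, ((A x i s + A x s i) * pd i (fun y => B y k l) x
        - (B x i s + B x s i) * pd i (fun y => A y k l) x)) * pd s (pd k (pd l f)) x)
        = ∑ s, ∑ k, ∑ l, ∑ i, (((A x i s + A x s i) * pd i (fun y => B y k l) x
        - (B x i s + B x s i) * pd i (fun y => A y k l) x) * pd s (pd k (pd l f)) x) := by
      refine Finset.sum_congr rfl fun s _ => Finset.sum_congr rfl fun k _ =>
        Finset.sum_congr rfl fun l _ => ?_
      exact Finset.sum_mul ..
    rw [step, nest4]
    have reind : (∑ q : Fin n × Fin n × Fin n × Fin n, (((A x q.2.2.2 q.1 + A x q.1 q.2.2.2) * pd q.2.2.2 (fun y => B y q.2.1 q.2.2.1) x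
        - (B x q.2.2.2 q.1 + B x q.1 q.2.2.2) * pd q.2.2.2 (fun y => A y q.2.1 q.2.2.1) x)
          * pd q.1 (pd q.2.1 (pd q.2.2.1 f)) x))
        = ∑ p : Fin n × Fin n × Fin n × Fin n, (((A x p.1 p.2.1 + A x p.2.1 p.1) * pd p.1 (fun y => B y p.2.2.1 p.2.2.2) x
        - (B x p.1 p.2.1 + B x p.2.1 p.1) * pd p.1 (fun y => A y p.2.2.1 p.2.2.2) x)
          * pd p.2.1 (pd p.2.2.1 (pd p.2.2.2 f)) x) := by
      refine (Fintype.sum_bijective (fun p : Fin n × Fin n × Fin n × Fin n => (p.2.1, p.2.2.1, p.2.2.2, p.1))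
        (Equiv.mk (fun p : Fin n × Fin n × Fin n × Fin n => (p.2.1, p.2.2.1, p.2.2.2, p.1))
          (fun p : Fin n × Fin n × Fin n × Fin n => (p.2.2.2, p.1, p.2.1, p.2.2.1))
          (fun p => rfl) (fun p => rfl)).bijective _ _ fun p => rfl).symm
    rw [reind]
    have merge : (2 * (∑ p : Fin n × Fin n × Fin n × Fin n, A x p.1 p.2.1 * pd p.1 (fun y => B y p.2.2.1 p.2.2.2) x * pd p.2.1 (pd p.2.2.1 (pd p.2.2.2 f)) x) - 2 * (∑ p : Fin n × Fin n × Fin n × Fin n, B x p.1 p.2.1 * pd p.1 (fun y => A y p.2.2.1 p.2.2.2) x * pd p.2.1 (pd p.2.2.1 (pd p.2.2.2 f)) x))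
        = ∑ p : Fin n × Fin n × Fin n × Fin n, (2 * (A x p.1 p.2.1 * pd p.1 (fun y => B y p.2.2.1 p.2.2.2) x * pd p.2.1 (pd p.2.2.1 (pd p.2.2.2 f)) x) - 2 * (B x p.1 p.2.1 * pd p.1 (fun y => A y p.2.2.1 p.2.2.2) x * pd p.2.1 (pd p.2.2.1 (pd p.2.2.2 f)) x)) := by
      rw [Finset.mul_sum, Finset.mul_sum, ← Finset.sum_sub_distrib]
    rw [merge]
    refine Finset.sum_congr rfl fun p _ => ?_
    rw [hAx p.2.1 p.1, hBx p.2.1 p.1]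
    ring
  rw [lhsA, lhsB, rhs1, rhs2]
  linarith [pair1ab, pair1ba, pair5ab, pair5ba, pair9ab, pair9ba, pair3ab, pair3ba,
    pair2ab, pair2ba, pair6ab, pair6ba, pair7ab, pair7ba, cancel4ab, cancel4ba,
    cancel12, pair1011ab, pair1011ba, hcz, hlink]

end PdAux
end
open PdAux in
theorem commutator_is_second_order {n : ℕ} (U : Set (Fin n → ℝ)) (hUo : IsOpen U)
    (A B : (Fin n → ℝ) → Matrix (Fin n) (Fin n) ℝ)
    (hAs : ∀ i j : Fin n, ContDiffOn ℝ (⊤ : ℕ∞) (fun x => A x i j) U)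
    (hBs : ∀ i j : Fin n, ContDiffOn ℝ (⊤ : ℕ∞) (fun x => B x i j) U)
    (hAsym : ∀ x ∈ U, (A x).IsSymm) (hBsym : ∀ x ∈ U, (B x).IsSymm)
    (hPoisson : ∀ x ∈ U, ∀ p : Fin n → ℝ,
      ∑ i, (pd i (fun p' => ∑ a, ∑ b, p' a * A x a b * p' b) p *
              pd i (fun x' => ∑ a, ∑ b, p a * B x' a b * p b) x -
            pd i (fun x' => ∑ a, ∑ b, p a * A x' a b * p b) x *
              pd i (fun p' => ∑ a, ∑ b, p' a * B x a b * p' b) p) = 0) :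
    ∃ (Q : (Fin n → ℝ) → Matrix (Fin n) (Fin n) ℝ) (V : (Fin n → ℝ) → Fin n → ℝ),
      (∀ i j : Fin n, ContDiffOn ℝ (⊤ : ℕ∞) (fun x => Q x i j) U) ∧
      (∀ x ∈ U, (Q x).IsSymm) ∧
      (∀ ℓ : Fin n, ContDiffOn ℝ (⊤ : ℕ∞) (fun x => V x ℓ) U) ∧
      ∀ f : (Fin n → ℝ) → ℝ, ContDiffOn ℝ (⊤ : ℕ∞) f U → ∀ x ∈ U,
        opPlain A (opPlain B f) x - opPlain B (opPlain A f) x =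
          opPlain Q f x + ∑ ℓ, V x ℓ * pd ℓ f x := by
  classical
  refine ⟨fun y => Matrix.of fun k l => (cc A B y k l + cc A B y l k) / 2,
    fun y l => ww A B y l - ∑ k, pd k (fun z => (cc A B z k l + cc A B z l k) / 2) y,
    ?_, ?_, ?_, ?_⟩
  · intro i j
    simp only [Matrix.of_apply]
    exact ((cc_smooth hUo A B hAs hBs i j).add (cc_smooth hUo A B hAs hBs j i)).div_const 2
  · intro x _
    apply Matrix.ext
    intro i j
    simp only [Matrix.transpose_apply, Matrix.of_apply]
    ring
  · intro l
    refine (ww_smooth hUo A B hAs hBs l).sub ?_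
    refine ContDiffOn.sum fun k _ => ?_
    exact pd_contDiffOn hUo
      (((cc_smooth hUo A B hAs hBs k l).add (cc_smooth hUo A B hAs hBs l k)).div_const 2)
  · intro f hf x hx
    have hAx : ∀ a b, A x a b = A x b a := fun a b => by
      have h := congrFun (congrFun (hAsym x hx) b) a
      rwa [Matrix.transpose_apply] at h
    have hBx : ∀ a b, B x a b = B x b a := fun a b => by
      have h := congrFun (congrFun (hBsym x hx) b) a
      rwa [Matrix.transpose_apply] at h
    have hcubic := poisson_cubic hUo A B hAs hBs hPoisson hx
    rw [expandAB hUo A B hAs hBs f hf hx, expandAB hUo B A hBs hAs f hf hx,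
        ML2 hUo A B hAs hBs f hf hx hAx hBx hcubic]
    -- now handle the RHS with Q and V
    have hQentry : ∀ k l : Fin n,
        ContDiffOn ℝ (⊤ : ℕ∞) (fun y => (cc A B y k l + cc A B y l k) / 2) U :=
      fun k l => ((cc_smooth hUo A B hAs hBs k l).add (cc_smooth hUo A B hAs hBs l k)).div_const 2
    have hQrule : opPlain (fun y => Matrix.of fun k l => (cc A B y k l + cc A B y l k) / 2) f x
        = (∑ k, ∑ l, pd k (fun y => (cc A B y k l + cc A B y l k) / 2) x * pd l f x)
          + ∑ k, ∑ l, ((cc A B x k l + cc A B x l k) / 2) * pd k (pd l f) x := by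
      show (∑ i, ∑ j, pd i (fun y => (cc A B y i j + cc A B y j i) / 2 * pd j f y) x) = _
      have hstep : ∀ i j : Fin n,
          pd i (fun y => (cc A B y i j + cc A B y j i) / 2 * pd j f y) x
          = pd i (fun y => (cc A B y i j + cc A B y j i) / 2) x * pd j f x
            + ((cc A B x i j + cc A B x j i) / 2) * pd i (pd j f) x :=
        fun i j => pd_mul (diffAt hUo (hQentry i j) hx) (diffAt hUo (pd_contDiffOn hUo hf) hx)
      rw [Finset.sum_congr rfl fun i _ => Finset.sum_congr rfl fun j _ => hstep i j]
      simp only [Finset.sum_add_distrib]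
    have hV : (∑ l, (ww A B x l - ∑ k, pd k (fun z => (cc A B z k l + cc A B z l k) / 2) x)
          * pd l f x)
        = (∑ l, ww A B x l * pd l f x)
          - ∑ l, ∑ k, pd k (fun z => (cc A B z k l + cc A B z l k) / 2) x * pd l f x := by
      simp only [sub_mul, Finset.sum_sub_distrib, Finset.sum_mul]
    have hsym2 : (∑ k, ∑ l, cc A B x l k * pd k (pd l f) x)
        = ∑ k, ∑ l, cc A B x k l * pd k (pd l f) x := by
      rw [Finset.sum_comm]
      refine Finset.sum_congr rfl fun k _ => Finset.sum_congr rfl fun l _ => ?_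
      rw [pd_comm hUo hf hx]
    have hhalf : (∑ k, ∑ l, ((cc A B x k l + cc A B x l k) / 2) * pd k (pd l f) x)
        = ∑ k, ∑ l, cc A B x k l * pd k (pd l f) x := by
      have expand : ∀ k l : Fin n, ((cc A B x k l + cc A B x l k) / 2) * pd k (pd l f) x
          = (1/2) * (cc A B x k l * pd k (pd l f) x)
            + (1/2) * (cc A B x l k * pd k (pd l f) x) := fun k l => by ring
      rw [Finset.sum_congr rfl fun k _ => Finset.sum_congr rfl fun l _ => expand k l]
      simp only [Finset.sum_add_distrib, ← Finset.mul_sum]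
      rw [hsym2]
      ring
    have hco : (∑ k, ∑ l, pd k (fun y => (cc A B y k l + cc A B y l k) / 2) x * pd l f x)
        = ∑ l, ∑ k, pd k (fun y => (cc A B y k l + cc A B y l k) / 2) x * pd l f x :=
      Finset.sum_comm
    rw [hQrule, hV, hhalf, hco]
    ring
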